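/- arXiv:2312.13254 — 3 statements merged into one kernel-verified Lean document; each statement's English description precedes it below -/
import Mathlib

section
/- Suppose loss : ℝ → ℝ is convex and Lipschitz with argmin loss = {0}, δ > 1, and P(Z ≠ 0) > 0. If v_* ∈ H solves min_{v∈H : Gcal(v) ≤ 0} Lcal(v) with ‖v_*‖ > 0, then for any Lagrange multiplier μ_* > 0 satisfying the KKT condition at v_*, the positive scalars α_* = ‖v_*‖/√(1−δ⁻¹) and κ_* = ‖v_*‖/μ_* solve the nonlinear system, and moreover v_* = prox[κ_*·loss](α_* G + Z) − Z. -/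
open MeasureTheory ProbabilityTheory Real Set Filter

noncomputable section

/-- Subdifferential of a function `f : ℝ → ℝ` at `x`. -/
def subderiv (f : ℝ → ℝ) (x : ℝ) : Set ℝ :=
  {g : ℝ | ∀ y : ℝ, f x + g * (y - x) ≤ f y}

/-- Moreau envelope `env_f(x; τ)`. -/
def moreau (f : ℝ → ℝ) (τ x : ℝ) : ℝ :=
  ⨅ u : ℝ, ((x - u) ^ 2 / (2 * τ) + f u)

/-- Proximal operator `prox[τ·f](x)`, the minimizer of `u ↦ τ f(u) + (x-u)²/2`. -/
def prox (τ : ℝ) (f : ℝ → ℝ) (x : ℝ) : ℝ :=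
  Classical.epsilon fun u : ℝ =>
    ∀ y : ℝ, τ * f u + (x - u) ^ 2 / 2 ≤ τ * f y + (x - y) ^ 2 / 2

/-- Joint law of `(G, W)` where `G ~ N(0,1)` is independent of `W ~ ζ`. -/
def nu (ζ : Measure ℝ) : Measure (ℝ × ℝ) :=
  (gaussianReal 0 1).prod ζ

/-- The set of global minimizers of `f` is `{0}`. -/
def argminIsZero (f : ℝ → ℝ) : Prop :=
  {x : ℝ | ∀ y : ℝ, f x ≤ f y} = {0}

/-- `f` is Lipschitz. -/
def LipschitzFun (f : ℝ → ℝ) : Prop := ∃ K : NNReal, LipschitzWith K f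

/-- `L(c, τ) = E[env_loss(c·G + Z; τ) − loss(Z)]`. -/
def Lfun (ζ : Measure ℝ) (loss : ℝ → ℝ) (c τ : ℝ) : ℝ :=
  ∫ p : ℝ × ℝ, (moreau loss τ (c * p.1 + p.2) - loss p.2) ∂(nu ζ)

/-- Unregularized potential `M(α)`. -/
def Mpot (ζ : Measure ℝ) (loss : ℝ → ℝ) (δ α : ℝ) : ℝ :=
  ⨆ β : Ioi (0:ℝ), ⨅ τg : Ioi (0:ℝ),
    ((β : ℝ) * (τg : ℝ) / (2 * δ) + Lfun ζ loss α ((τg : ℝ) / (β : ℝ)) - α * (β : ℝ) / δ)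

/-- Membership in the Hilbert space `H` of square integrable functions of `(G, Z)`. -/
def inH (ζ : Measure ℝ) (v : ℝ × ℝ → ℝ) : Prop :=
  MemLp v 2 (nu ζ)

/-- Hilbert norm `‖v‖ = E[v²]^{1/2}`. -/
def hnorm (ζ : Measure ℝ) (v : ℝ × ℝ → ℝ) : ℝ :=
  Real.sqrt (∫ p : ℝ × ℝ, (v p) ^ 2 ∂(nu ζ))

/-- `Lcal(v) = E[loss(v + Z) − loss(Z)]`. -/
def Lcal (ζ : Measure ℝ) (loss : ℝ → ℝ) (v : ℝ × ℝ → ℝ) : ℝ :=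
  ∫ p : ℝ × ℝ, (loss (v p + p.2) - loss p.2) ∂(nu ζ)

/-- `Gcal(v) = ‖v‖ − E[v·G]/√(1 − δ⁻¹)`. -/
def Gcal (ζ : Measure ℝ) (δ : ℝ) (v : ℝ × ℝ → ℝ) : ℝ :=
  hnorm ζ v - (∫ p : ℝ × ℝ, v p * p.1 ∂(nu ζ)) / Real.sqrt (1 - δ⁻¹)

/-- `v` solves `min_{v ∈ H, Gcal(v) ≤ 0} Lcal(v)`. -/
def SolvesConstrained (ζ : Measure ℝ) (loss : ℝ → ℝ) (δ : ℝ) (v : ℝ × ℝ → ℝ) : Prop :=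
  inH ζ v ∧ Gcal ζ δ v ≤ 0 ∧
    ∀ u : ℝ × ℝ → ℝ, inH ζ u → Gcal ζ δ u ≤ 0 → Lcal ζ loss v ≤ Lcal ζ loss u

/-- Subdifferential of a functional `F : H → ℝ` at `v`, as a subset of `H`. -/
def subdiffH (ζ : Measure ℝ) (F : (ℝ × ℝ → ℝ) → ℝ) (v : ℝ × ℝ → ℝ) : Set (ℝ × ℝ → ℝ) :=
  {g | inH ζ g ∧ ∀ u : ℝ × ℝ → ℝ, inH ζ u →
    F v + ∫ p : ℝ × ℝ, g p * (u p - v p) ∂(nu ζ) ≤ F u}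

/-- KKT condition at `v` with multiplier `μ`:
`(−μ)·∂Gcal(v) ∩ ∂Lcal(v) ≠ ∅`, `μ·Gcal(v) = 0`, `Gcal(v) ≤ 0`. -/
def KKT (ζ : Measure ℝ) (loss : ℝ → ℝ) (δ μ : ℝ) (v : ℝ × ℝ → ℝ) : Prop :=
  (∃ h ∈ subdiffH ζ (Gcal ζ δ) v, (fun p => -μ * h p) ∈ subdiffH ζ (Lcal ζ loss) v) ∧
    μ * Gcal ζ δ v = 0 ∧ Gcal ζ δ v ≤ 0

/-- The two-equation nonlinear system with unknowns `(α, κ)`. -/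
def solvesSystem (ζ : Measure ℝ) (loss : ℝ → ℝ) (δ α κ : ℝ) : Prop :=
  α ^ 2 = δ * ∫ p : ℝ × ℝ,
      ((α * p.1 + p.2) - prox κ loss (α * p.1 + p.2)) ^ 2 ∂(nu ζ) ∧
  α = δ * ∫ p : ℝ × ℝ,
      ((α * p.1 + p.2) - prox κ loss (α * p.1 + p.2)) * p.1 ∂(nu ζ)

/-- Threshold `δ_perfect = 1/(1 − inf_{t>0} E[dist(G, t·∂loss(Z))²])₊ ∈ (0, ∞]`. -/
def deltaPerfect (ζ : Measure ℝ) (loss : ℝ → ℝ) : ENNReal :=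
  1 / ENNReal.ofReal
    (1 - ⨅ t : Ioi (0:ℝ),
      ∫ p : ℝ × ℝ, (Metric.infDist p.1 ((fun g => (t : ℝ) * g) '' subderiv loss p.2)) ^ 2 ∂(nu ζ))


namespace Stmt4Aux

open scoped ENNReal NNReal

lemma int_mul {Ω : Type*} [MeasurableSpace Ω] {P : Measure Ω} {f g : Ω → ℝ}
    (hf : MemLp f 2 P) (hg : MemLp g 2 P) : Integrable (fun x => f x * g x) P := by
  have hbd : Integrable (fun x => (f x ^ 2 + g x ^ 2) / 2) P :=
    (hf.integrable_sq.add hg.integrable_sq).div_const 2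
  refine hbd.mono' (hf.aestronglyMeasurable.mul hg.aestronglyMeasurable) ?_
  filter_upwards with x
  rw [Real.norm_eq_abs, abs_mul]
  nlinarith [sq_nonneg (|f x| - |g x|), sq_abs (f x), sq_abs (g x),
    abs_nonneg (f x), abs_nonneg (g x)]

lemma deriv_aux (x : ℝ) :
    HasDerivAt (fun y : ℝ => -(y * Real.exp (-2⁻¹ * y ^ 2)))
      (x ^ 2 * Real.exp (-2⁻¹ * x ^ 2) - Real.exp (-2⁻¹ * x ^ 2)) x := by
  have h1 : HasDerivAt (fun y : ℝ => -2⁻¹ * y ^ 2) (-2⁻¹ * (2 * x)) x := by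
    simpa using ((hasDerivAt_pow 2 x).const_mul (-2⁻¹ : ℝ))
  have h3 : HasDerivAt (fun y : ℝ => y * Real.exp (-2⁻¹ * y ^ 2))
      (1 * Real.exp (-2⁻¹ * x ^ 2) + x * (Real.exp (-2⁻¹ * x ^ 2) * (-2⁻¹ * (2 * x)))) x :=
    (hasDerivAt_id x).mul h1.exp
  have : HasDerivAt (fun y : ℝ => -(y * Real.exp (-2⁻¹ * y ^ 2)))
      (-(1 * Real.exp (-2⁻¹ * x ^ 2) + x * (Real.exp (-2⁻¹ * x ^ 2) * (-2⁻¹ * (2 * x))))) x :=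
    h3.neg
  convert this using 1
  ring

lemma tendsto_top_aux : Tendsto (fun x : ℝ => x * Real.exp (-2⁻¹ * x ^ 2)) atTop (nhds 0) := by
  have h := rpow_mul_exp_neg_mul_sq_isLittleO_exp_neg (by norm_num : (0:ℝ) < 2⁻¹) 1
  have heq : (fun x : ℝ => x ^ (1:ℝ) * Real.exp (-2⁻¹ * x ^ 2))
      = fun x : ℝ => x * Real.exp (-2⁻¹ * x ^ 2) := by
    funext x; rw [Real.rpow_one]
  rw [heq] at h
  have hexp : Tendsto (fun x : ℝ => Real.exp (-(1/2) * x)) atTop (nhds 0) := by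
    apply Real.tendsto_exp_atBot.comp
    exact Tendsto.const_mul_atTop_of_neg (by norm_num : (-(1/2):ℝ) < 0) tendsto_id
  exact h.isBigO.trans_tendsto hexp

lemma integrable_sq_exp : Integrable (fun x : ℝ => x ^ 2 * Real.exp (-2⁻¹ * x ^ 2)) := by
  have h := integrable_rpow_mul_exp_neg_mul_sq (by norm_num : (0:ℝ) < 2⁻¹)
      (by norm_num : (-1:ℝ) < 2)
  have heq : (fun x : ℝ => x ^ (2:ℝ) * Real.exp (-2⁻¹ * x ^ 2))
      = fun x : ℝ => x ^ 2 * Real.exp (-2⁻¹ * x ^ 2) := by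
    funext x
    rw [show (2:ℝ) = ((2:ℕ):ℝ) by norm_num, Real.rpow_natCast]
  rwa [heq] at h

lemma integral_sq_exp : ∫ x : ℝ, x ^ 2 * Real.exp (-2⁻¹ * x ^ 2) = Real.sqrt (2 * π) := by
  set f' : ℝ → ℝ := fun x => x ^ 2 * Real.exp (-2⁻¹ * x ^ 2) - Real.exp (-2⁻¹ * x ^ 2) with hf'
  set F : ℝ → ℝ := fun y => -(y * Real.exp (-2⁻¹ * y ^ 2)) with hF
  have hint : Integrable f' := integrable_sq_exp.sub (integrable_exp_neg_mul_sq (by norm_num))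
  have htop : Tendsto F atTop (nhds 0) := by
    rw [hF]
    simpa using tendsto_top_aux.neg
  have hbot : Tendsto F atBot (nhds 0) := by
    have h3 := tendsto_top_aux.comp tendsto_neg_atBot_atTop
    have : F = (fun y : ℝ => y * Real.exp (-2⁻¹ * y ^ 2)) ∘ Neg.neg := by
      funext x
      simp only [Function.comp_apply, hF, neg_sq]
      ring
    rw [this]
    exact h3
  have hIoi : ∫ x in Ioi (0:ℝ), f' x = 0 - F 0 :=
    integral_Ioi_of_hasDerivAt_of_tendsto' (fun x _ => deriv_aux x) hint.integrableOn htop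
  have hIic : ∫ x in Iic (0:ℝ), f' x = F 0 - 0 :=
    integral_Iic_of_hasDerivAt_of_tendsto' (fun x _ => deriv_aux x) hint.integrableOn hbot
  have hsplit := intervalIntegral.integral_Iic_add_Ioi (b := (0:ℝ))
    hint.integrableOn hint.integrableOn
  have hzero : ∫ x, f' x = 0 := by
    rw [hIic, hIoi] at hsplit
    linarith
  have hsub : ∫ x, f' x = (∫ x : ℝ, x ^ 2 * Real.exp (-2⁻¹ * x ^ 2))
      - ∫ x : ℝ, Real.exp (-2⁻¹ * x ^ 2) :=
    integral_sub integrable_sq_exp (integrable_exp_neg_mul_sq (by norm_num))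
  have hgauss : ∫ x : ℝ, Real.exp (-2⁻¹ * x ^ 2) = Real.sqrt (2 * π) := by
    rw [integral_gaussian, show (π / 2⁻¹) = 2 * π by ring]
  rw [hsub, hgauss] at hzero
  linarith

lemma gaussianPDFReal_eq (x : ℝ) :
    gaussianPDFReal 0 1 x = (Real.sqrt (2 * π))⁻¹ * Real.exp (-2⁻¹ * x ^ 2) := by
  unfold gaussianPDFReal
  push_cast
  rw [mul_one, sub_zero, show -x ^ 2 / (2*(1:ℝ)) = -2⁻¹ * x ^ 2 by ring]

lemma gaussian_withDensity :
    gaussianReal 0 1 = MeasureTheory.volume.withDensity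
      (fun x => ((Real.toNNReal (gaussianPDFReal 0 1 x) : ℝ≥0) : ℝ≥0∞)) := by
  rw [gaussianReal_of_var_ne_zero 0 one_ne_zero]
  rfl

lemma pdf_meas : Measurable fun x => Real.toNNReal (gaussianPDFReal 0 1 x) :=
  (measurable_gaussianPDFReal 0 1).real_toNNReal

lemma pdf_smul_eq (x : ℝ) (y : ℝ) :
    (Real.toNNReal (gaussianPDFReal 0 1 x) : ℝ≥0) • y
      = (Real.sqrt (2 * π))⁻¹ * (y * Real.exp (-2⁻¹ * x ^ 2)) := by
  rw [NNReal.smul_def, Real.coe_toNNReal _ (gaussianPDFReal_nonneg 0 1 x), gaussianPDFReal_eq,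
    smul_eq_mul]
  ring

lemma integrable_sq_gaussianReal : Integrable (fun x : ℝ => x ^ 2) (gaussianReal 0 1) := by
  rw [gaussian_withDensity, integrable_withDensity_iff_integrable_smul pdf_meas]
  refine ((integrable_sq_exp.const_mul ((Real.sqrt (2 * π))⁻¹)).congr ?_)
  filter_upwards with x
  rw [pdf_smul_eq]

lemma integral_sq_gaussianReal : ∫ x, x ^ 2 ∂(gaussianReal 0 1) = 1 := by
  rw [gaussian_withDensity, integral_withDensity_eq_integral_smul pdf_meas]
  have : ∫ x : ℝ, (Real.toNNReal (gaussianPDFReal 0 1 x) : ℝ≥0) • x ^ 2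
      = ∫ x : ℝ, (Real.sqrt (2 * π))⁻¹ * (x ^ 2 * Real.exp (-2⁻¹ * x ^ 2)) :=
    integral_congr_ae (Filter.Eventually.of_forall fun x => pdf_smul_eq x _)
  rw [this, integral_const_mul, integral_sq_exp, inv_mul_cancel₀]
  positivity

lemma prox_eq_of_subderiv {loss : ℝ → ℝ} (hconv : ConvexOn ℝ Set.univ loss)
    {τ x u g : ℝ} (hτ : 0 < τ) (hg : g ∈ subderiv loss u) (hx : x = u + τ * g) :
    prox τ loss x = u := by
  set P : ℝ → Prop := fun w =>
    ∀ y : ℝ, τ * loss w + (x - w) ^ 2 / 2 ≤ τ * loss y + (x - y) ^ 2 / 2 with hP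
  have hu : P u := by
    intro y
    have h1 := hg y
    have h2 : 0 ≤ (u - y) ^ 2 := sq_nonneg _
    subst hx
    nlinarith [mul_le_mul_of_nonneg_left h1 hτ.le]
  have hPw : P (prox τ loss x) := Classical.epsilon_spec (⟨u, hu⟩ : ∃ w, P w)
  set w := prox τ loss x with hw
  by_contra hne
  have h1 := hPw u
  have h2 := hu w
  have heq : τ * loss w + (x - w) ^ 2 / 2 = τ * loss u + (x - u) ^ 2 / 2 := le_antisymm h1 h2
  have hm := hu ((w + u) / 2)
  have hcv : loss ((w + u) / 2) ≤ (loss w + loss u) / 2 := by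
    have := hconv.2 (Set.mem_univ w) (Set.mem_univ u)
      (by norm_num : (0:ℝ) ≤ 1/2) (by norm_num : (0:ℝ) ≤ 1/2) (by norm_num : (1:ℝ)/2 + 1/2 = 1)
    simp only [smul_eq_mul] at this
    calc loss ((w + u) / 2) = loss (1/2 * w + 1/2 * u) := by ring_nf
    _ ≤ 1/2 * loss w + 1/2 * loss u := this
    _ = (loss w + loss u) / 2 := by ring
  have hwu : (w - u) ^ 2 > 0 := by
    have : w - u ≠ 0 := sub_ne_zero.2 hne
    positivity
  nlinarith [mul_le_mul_of_nonneg_left hcv hτ.le]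

lemma subderiv_of_rat {loss : ℝ → ℝ} (hc : Continuous loss) {x g : ℝ}
    (h : ∀ q : ℚ, loss x + g * q ≤ loss (x + q)) : g ∈ subderiv loss x := by
  have hall : ∀ c : ℝ, loss x + g * c ≤ loss (x + c) := by
    have hcl : IsClosed {c : ℝ | loss x + g * c ≤ loss (x + c)} :=
      isClosed_le (by continuity) (by continuity)
    have hsub : Set.range ((↑) : ℚ → ℝ) ⊆ {c : ℝ | loss x + g * c ≤ loss (x + c)} := by
      rintro _ ⟨q, rfl⟩
      exact h q
    have hcls := hcl.closure_subset_iff.2 hsub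
    rw [Rat.denseRange_cast.closure_range] at hcls
    intro c
    exact hcls (Set.mem_univ c)
  intro y
  have := hall (y - x)
  rwa [add_sub_cancel] at this

end Stmt4Aux

set_option maxHeartbeats 4000000 in
/-- from a nonzero minimizer `v_*` of the constrained problem and any Lagrange
multiplier `μ_* > 0` satisfying the KKT condition, the scalars `α_* = ‖v_*‖/√(1−δ⁻¹)` and
`κ_* = ‖v_*‖/μ_*` solve the nonlinear system, and `v_* = prox[κ_* loss](α_* G + Z) − Z`. -/
theorem stmt4 (ζ : Measure ℝ) [IsProbabilityMeasure ζ] (loss : ℝ → ℝ) (δ : ℝ)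
    (hconv : ConvexOn ℝ Set.univ loss) (hlip : LipschitzFun loss)
    (hmin : argminIsZero loss) (hδ : 1 < δ) (hZ : 0 < ζ {x : ℝ | x ≠ 0})
    (v : ℝ × ℝ → ℝ) (hv : SolvesConstrained ζ loss δ v) (hvpos : 0 < hnorm ζ v)
    (μ : ℝ) (hμ : 0 < μ) (hKKT : KKT ζ loss δ μ v) :
    0 < hnorm ζ v / Real.sqrt (1 - δ⁻¹) ∧ 0 < hnorm ζ v / μ ∧
    solvesSystem ζ loss δ (hnorm ζ v / Real.sqrt (1 - δ⁻¹)) (hnorm ζ v / μ) ∧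
    v =ᵐ[nu ζ] fun p =>
      prox (hnorm ζ v / μ) loss ((hnorm ζ v / Real.sqrt (1 - δ⁻¹)) * p.1 + p.2) - p.2 := by
  classical
  obtain ⟨K, hK⟩ := hlip
  have hKKT' : (∃ h ∈ subdiffH ζ (Gcal ζ δ) v,
      (fun p => -μ * h p) ∈ subdiffH ζ (Lcal ζ loss) v) ∧
      μ * Gcal ζ δ v = 0 ∧ Gcal ζ δ v ≤ 0 := hKKT
  obtain ⟨⟨h, hh, hgsub⟩, hcomp, -⟩ := hKKT'
  obtain ⟨hvH', hvG, -⟩ := hv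
  have hv2 : MemLp v 2 (nu ζ) := hvH'
  have hh2 : MemLp h 2 (nu ζ) := hh.1
  have hhineq := hh.2
  have hg2 : MemLp (fun p => -μ * h p) 2 (nu ζ) := hgsub.1
  have hgineq := hgsub.2
  haveI hprob : IsProbabilityMeasure (nu ζ) := by
    unfold nu; infer_instance
  have hδ0 : (0:ℝ) < δ := lt_trans one_pos hδ
  have h01 : 0 < 1 - δ⁻¹ := by
    have hinv : δ⁻¹ * δ = 1 := inv_mul_cancel₀ (ne_of_gt hδ0)
    have hpos : 0 < δ⁻¹ := inv_pos.mpr hδ0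
    nlinarith [mul_lt_mul_of_pos_left hδ hpos]
  have hs : 0 < Real.sqrt (1 - δ⁻¹) := Real.sqrt_pos.2 h01
  set r := hnorm ζ v with hr
  set c0 : ℝ := (Real.sqrt (1 - δ⁻¹))⁻¹ with hc0
  set α := r / Real.sqrt (1 - δ⁻¹) with hα
  set κ := r / μ with hκ
  have hαpos : 0 < α := div_pos hvpos hs
  have hκpos : 0 < κ := div_pos hvpos hμ
  have hrne : r ≠ 0 := ne_of_gt hvpos
  have hμne : μ ≠ 0 := ne_of_gt hμ
  have hrr : r * r⁻¹ = 1 := mul_inv_cancel₀ hrne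
  have hrα : r = α * Real.sqrt (1 - δ⁻¹) := by
    rw [hα, div_mul_cancel₀ _ hs.ne']
  have hGcal0 : Gcal ζ δ v = 0 := by
    rcases mul_eq_zero.mp hcomp with h' | h'
    · exact absurd h' hμ.ne'
    · exact h'
  -- second moment of the Gaussian coordinate
  have hmp : MeasurePreserving (Prod.fst : ℝ × ℝ → ℝ) (nu ζ) (gaussianReal 0 1) := by
    refine ⟨measurable_fst, ?_⟩
    show Measure.map Prod.fst ((gaussianReal 0 1).prod ζ) = gaussianReal 0 1
    rw [Measure.map_fst_prod]
    simp
  have hG2 : MemLp (fun p : ℝ × ℝ => p.1) 2 (nu ζ) := by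
    rw [memLp_two_iff_integrable_sq measurable_fst.aestronglyMeasurable]
    exact (hmp.integrable_comp ((measurable_id.pow_const 2).aestronglyMeasurable)).mpr
      Stmt4Aux.integrable_sq_gaussianReal
  have hIG2 : ∫ p : ℝ × ℝ, p.1 ^ 2 ∂(nu ζ) = 1 := by
    have h1 : ∫ x, x ^ 2 ∂(Measure.map Prod.fst (nu ζ)) = ∫ p : ℝ × ℝ, p.1 ^ 2 ∂(nu ζ) :=
      integral_map measurable_fst.aemeasurable (continuous_pow 2).aestronglyMeasurable
    rw [← h1, hmp.map_eq, Stmt4Aux.integral_sq_gaussianReal]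
  have hrs : r = Real.sqrt (∫ p, (v p) ^ 2 ∂(nu ζ)) := hr
  have hIv2 : ∫ p, (v p) ^ 2 ∂(nu ζ) = r ^ 2 := by
    rw [hrs, Real.sq_sqrt (integral_nonneg fun p => sq_nonneg _)]
  -- Stage 1 : identify the Gcal subgradient
  set k : ℝ × ℝ → ℝ := fun p => h p + c0 * p.1 with hkdef
  have hk2 : MemLp k 2 (nu ζ) := hh2.add (hG2.const_mul c0)
  have key : ∀ u : ℝ × ℝ → ℝ, inH ζ u →
      (∫ p, k p * (u p - v p) ∂(nu ζ)) ≤ hnorm ζ u - r := by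
    intro u hu
    have hu2 : MemLp u 2 (nu ζ) := hu
    have h2 := hhineq u hu
    have hint1 : Integrable (fun p => h p * (u p - v p)) (nu ζ) :=
      Stmt4Aux.int_mul hh2 (hu2.sub hv2)
    have hint2 : Integrable (fun p : ℝ × ℝ => p.1 * (u p - v p)) (nu ζ) :=
      Stmt4Aux.int_mul hG2 (hu2.sub hv2)
    have hintu : Integrable (fun p : ℝ × ℝ => u p * p.1) (nu ζ) := Stmt4Aux.int_mul hu2 hG2
    have hintv : Integrable (fun p : ℝ × ℝ => v p * p.1) (nu ζ) := Stmt4Aux.int_mul hv2 hG2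
    have e2 : ∫ p : ℝ × ℝ, p.1 * (u p - v p) ∂(nu ζ)
        = (∫ p, u p * p.1 ∂(nu ζ)) - ∫ p, v p * p.1 ∂(nu ζ) := by
      rw [← integral_sub hintu hintv]
      refine integral_congr_ae (Eventually.of_forall fun p => ?_)
      ring
    have hsplit : ∫ p, k p * (u p - v p) ∂(nu ζ)
        = (∫ p, h p * (u p - v p) ∂(nu ζ))
          + (c0 * (∫ p, u p * p.1 ∂(nu ζ)) - c0 * ∫ p, v p * p.1 ∂(nu ζ)) := by
      have e1 : ∫ p, k p * (u p - v p) ∂(nu ζ)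
          = (∫ p, h p * (u p - v p) ∂(nu ζ))
            + ∫ p : ℝ × ℝ, c0 * (p.1 * (u p - v p)) ∂(nu ζ) := by
        rw [← integral_add hint1 (hint2.const_mul c0)]
        refine integral_congr_ae (Eventually.of_forall fun p => ?_)
        simp only [hkdef]; ring
      rw [e1, integral_const_mul, e2]
      ring
    have hGu : Gcal ζ δ u = hnorm ζ u - (∫ p, u p * p.1 ∂(nu ζ)) / Real.sqrt (1 - δ⁻¹) := rfl
    have hGv : Gcal ζ δ v = hnorm ζ v - (∫ p, v p * p.1 ∂(nu ζ)) / Real.sqrt (1 - δ⁻¹) := rfl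
    rw [hGu, hGv] at h2
    have hd : ∀ y : ℝ, y / Real.sqrt (1 - δ⁻¹) = c0 * y := fun y => by
      rw [hc0, div_eq_mul_inv, mul_comm]
    rw [hd, hd, ← hr] at h2
    rw [hsplit]
    linarith
  have hIkv : ∫ p, k p * v p ∂(nu ζ) = r := by
    have e0 := key (fun _ => 0) (memLp_const 0)
    have h00 : hnorm ζ (fun _ : ℝ × ℝ => 0) = 0 := by
      have hd : hnorm ζ (fun _ : ℝ × ℝ => 0)
          = Real.sqrt (∫ _ : ℝ × ℝ, (0:ℝ) ^ 2 ∂(nu ζ)) := rfl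
      rw [hd]; simp
    have e0' : ∫ p, k p * ((0:ℝ) - v p) ∂(nu ζ) = - ∫ p, k p * v p ∂(nu ζ) := by
      rw [← integral_neg]
      refine integral_congr_ae (Eventually.of_forall fun p => ?_)
      ring
    rw [e0', h00] at e0
    have e1 := key (fun p => 2 * v p) (hv2.const_mul 2)
    have h2v : hnorm ζ (fun p => 2 * v p) = 2 * r := by
      have hd : hnorm ζ (fun p => 2 * v p)
          = Real.sqrt (∫ p, (2 * v p) ^ 2 ∂(nu ζ)) := rfl
      have hii : ∫ p, (2 * v p) ^ 2 ∂(nu ζ) = 4 * ∫ p, (v p) ^ 2 ∂(nu ζ) := by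
        rw [← integral_const_mul]
        exact integral_congr_ae (Eventually.of_forall fun p => by ring)
      rw [hd, hii, hIv2, show (4:ℝ) * r ^ 2 = (2 * r) ^ 2 by ring,
        Real.sqrt_sq (by positivity)]
    have e1' : ∫ p, k p * (2 * v p - v p) ∂(nu ζ) = ∫ p, k p * v p ∂(nu ζ) :=
      integral_congr_ae (Eventually.of_forall fun p => by ring)
    rw [e1', h2v] at e1
    linarith
  have hkv_int : Integrable (fun p => k p * v p) (nu ζ) := Stmt4Aux.int_mul hk2 hv2
  have hs2nonneg : 0 ≤ ∫ p, (k p) ^ 2 ∂(nu ζ) := integral_nonneg fun p => sq_nonneg _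
  have hB : (∫ p, (k p) ^ 2 ∂(nu ζ)) ≤ 1 := by
    have e2 := key (fun p => v p + k p) (hv2.add hk2)
    have e2' : ∫ p, k p * (v p + k p - v p) ∂(nu ζ) = ∫ p, (k p) ^ 2 ∂(nu ζ) :=
      integral_congr_ae (Eventually.of_forall fun p => by ring)
    rw [e2'] at e2
    have hvk : hnorm ζ (fun p => v p + k p)
        = Real.sqrt (r ^ 2 + 2 * r + ∫ p, (k p) ^ 2 ∂(nu ζ)) := by
      have hd : hnorm ζ (fun p => v p + k p)
          = Real.sqrt (∫ p, (v p + k p) ^ 2 ∂(nu ζ)) := rfl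
      have hii : ∫ p, (v p + k p) ^ 2 ∂(nu ζ)
          = ((∫ p, (v p) ^ 2 ∂(nu ζ)) + 2 * ∫ p, k p * v p ∂(nu ζ))
            + ∫ p, (k p) ^ 2 ∂(nu ζ) := by
        have i1 := hv2.integrable_sq
        have i2 := hk2.integrable_sq
        have hfun : ∫ p, (v p + k p) ^ 2 ∂(nu ζ)
            = ∫ p, ((v p) ^ 2 + 2 * (k p * v p)) + (k p) ^ 2 ∂(nu ζ) :=
          integral_congr_ae (Eventually.of_forall fun p => by ring)
        have ia : Integrable (fun p => (v p) ^ 2 + 2 * (k p * v p)) (nu ζ) :=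
          i1.add (hkv_int.const_mul 2)
        rw [hfun, integral_add ia i2, integral_add i1 (hkv_int.const_mul 2), integral_const_mul]
      rw [hd, hii, hIv2, hIkv]
    rw [hvk] at e2
    have hsum : 0 ≤ r ^ 2 + 2 * r + ∫ p, (k p) ^ 2 ∂(nu ζ) := by
      nlinarith [hvpos]
    have hsq : ((∫ p, (k p) ^ 2 ∂(nu ζ)) + r) ^ 2
        ≤ r ^ 2 + 2 * r + ∫ p, (k p) ^ 2 ∂(nu ζ) := by
      have h1 : (∫ p, (k p) ^ 2 ∂(nu ζ)) + r
          ≤ Real.sqrt (r ^ 2 + 2 * r + ∫ p, (k p) ^ 2 ∂(nu ζ)) := by linarith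
      have h2 : ((∫ p, (k p) ^ 2 ∂(nu ζ)) + r) ^ 2
          ≤ (Real.sqrt (r ^ 2 + 2 * r + ∫ p, (k p) ^ 2 ∂(nu ζ))) ^ 2 :=
        pow_le_pow_left₀ (by linarith) h1 2
      rwa [Real.sq_sqrt hsum] at h2
    by_contra hgt
    push_neg at hgt
    nlinarith [mul_pos hvpos (sub_pos.mpr hgt),
      mul_pos (lt_trans one_pos hgt) (sub_pos.mpr hgt)]
  have hdiffint : Integrable (fun p => (k p - r⁻¹ * v p) ^ 2) (nu ζ) :=
    (hk2.sub (hv2.const_mul r⁻¹)).integrable_sq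
  have hE3 : ∫ p, (k p - r⁻¹ * v p) ^ 2 ∂(nu ζ) = (∫ p, (k p) ^ 2 ∂(nu ζ)) - 1 := by
    have hfun : ∫ p, (k p - r⁻¹ * v p) ^ 2 ∂(nu ζ)
        = ∫ p, ((k p) ^ 2 - (2 * r⁻¹) * (k p * v p)) + r⁻¹ ^ 2 * (v p) ^ 2 ∂(nu ζ) :=
      integral_congr_ae (Eventually.of_forall fun p => by ring)
    have ia : Integrable (fun p => (k p) ^ 2 - (2 * r⁻¹) * (k p * v p)) (nu ζ) :=
      hk2.integrable_sq.sub (hkv_int.const_mul _)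
    have ic : Integrable (fun p => r⁻¹ ^ 2 * (v p) ^ 2) (nu ζ) :=
      hv2.integrable_sq.const_mul _
    rw [hfun, integral_add ia ic,
      integral_sub hk2.integrable_sq (hkv_int.const_mul _),
      integral_const_mul, integral_const_mul, hIkv, hIv2]
    linear_combination (r * r⁻¹ - 1) * hrr
  have hzero : ∫ p, (k p - r⁻¹ * v p) ^ 2 ∂(nu ζ) = 0 := by
    have hge : 0 ≤ ∫ p, (k p - r⁻¹ * v p) ^ 2 ∂(nu ζ) :=
      integral_nonneg fun p => sq_nonneg _
    linarith
  have hae_k : ∀ᵐ p ∂(nu ζ), k p = r⁻¹ * v p := by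
    have hzz := (integral_eq_zero_iff_of_nonneg (fun p => sq_nonneg _) hdiffint).mp hzero
    filter_upwards [hzz] with p hp
    have hp0 : (k p - r⁻¹ * v p) ^ 2 = 0 := hp
    have h2 := (pow_eq_zero_iff two_ne_zero).mp hp0
    linarith [h2]
  -- Stage 2 : pointwise subgradient for Lcal
  have intLoss : ∀ w : ℝ × ℝ → ℝ, MemLp w 2 (nu ζ) →
      Integrable (fun p : ℝ × ℝ => loss (w p + p.2) - loss p.2) (nu ζ) := by
    intro w hw
    have hmeas : AEStronglyMeasurable (fun p : ℝ × ℝ => loss (w p + p.2) - loss p.2) (nu ζ) :=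
      (hK.continuous.comp_aestronglyMeasurable
        (hw.aestronglyMeasurable.add measurable_snd.aestronglyMeasurable)).sub
        (hK.continuous.comp_aestronglyMeasurable measurable_snd.aestronglyMeasurable)
    refine Integrable.mono' ((hw.integrable one_le_two).abs.const_mul (K : ℝ)) hmeas ?_
    filter_upwards with p
    have hd := hK.dist_le_mul (w p + p.2) p.2
    rw [Real.dist_eq, Real.dist_eq, add_sub_cancel_right] at hd
    rw [Real.norm_eq_abs]
    exact hd
  have hg2int : Integrable (fun p => -μ * h p) (nu ζ) := hg2.integrable one_le_two
  have stepc : ∀ c : ℝ, ∀ᵐ p ∂(nu ζ),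
      loss (v p + p.2) + (-μ * h p) * c ≤ loss (v p + p.2 + c) := by
    intro c
    have hvz : AEStronglyMeasurable (fun p : ℝ × ℝ => v p + p.2) (nu ζ) :=
      hv2.aestronglyMeasurable.add measurable_snd.aestronglyMeasurable
    have hmeasD : AEStronglyMeasurable
        (fun p : ℝ × ℝ => loss (v p + p.2 + c) - loss (v p + p.2)) (nu ζ) :=
      (hK.continuous.comp_aestronglyMeasurable (hvz.add aestronglyMeasurable_const)).sub
        (hK.continuous.comp_aestronglyMeasurable hvz)
    have hb : Integrable (fun p : ℝ × ℝ => loss (v p + p.2 + c) - loss (v p + p.2)) (nu ζ) := by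
      refine Integrable.mono' (integrable_const ((K : ℝ) * |c|)) hmeasD ?_
      filter_upwards with p
      have hd := hK.dist_le_mul (v p + p.2 + c) (v p + p.2)
      rw [Real.dist_eq, Real.dist_eq, add_sub_cancel_left] at hd
      rw [Real.norm_eq_abs]
      exact hd
    have hDint : Integrable
        (fun p : ℝ × ℝ => loss (v p + p.2 + c) - loss (v p + p.2) - (-μ * h p) * c) (nu ζ) :=
      hb.sub (hg2int.mul_const c)
    have hae := ae_nonneg_of_forall_setIntegral_nonneg hDint ?_
    · filter_upwards [hae] with p hp
      have hp' : (0:ℝ) ≤ loss (v p + p.2 + c) - loss (v p + p.2) - (-μ * h p) * c := hp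
      linarith
    intro A hA _
    have hind : MemLp (A.indicator fun _ => c) 2 (nu ζ) := (memLp_const c).indicator hA
    have huH : inH ζ (fun p => v p + A.indicator (fun _ => c) p) := hv2.add hind
    have hineq := hgineq _ huH
    beta_reduce at hineq
    have e1 : ∫ p, (-μ * h p) * (v p + A.indicator (fun _ => c) p - v p) ∂(nu ζ)
        = ∫ p in A, -μ * h p * c ∂(nu ζ) := by
      rw [← integral_indicator hA]
      refine integral_congr_ae (Eventually.of_forall fun p => ?_)
      by_cases hp : p ∈ A
      · simp only [Set.indicator_of_mem hp]
        ring
      · simp [Set.indicator_of_notMem hp]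
    have e2 : Lcal ζ loss (fun p => v p + A.indicator (fun _ => c) p) - Lcal ζ loss v
        = ∫ p in A, (loss (v p + p.2 + c) - loss (v p + p.2)) ∂(nu ζ) := by
      have hLu : Lcal ζ loss (fun p => v p + A.indicator (fun _ => c) p)
          = ∫ p, (loss (v p + A.indicator (fun _ => c) p + p.2) - loss p.2) ∂(nu ζ) := rfl
      have hLv : Lcal ζ loss v = ∫ p, (loss (v p + p.2) - loss p.2) ∂(nu ζ) := rfl
      rw [hLu, hLv, ← integral_sub (intLoss _ huH) (intLoss v hv2), ← integral_indicator hA]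
      refine integral_congr_ae (Eventually.of_forall fun p => ?_)
      by_cases hp : p ∈ A
      · simp only [Set.indicator_of_mem hp]
        rw [show v p + c + p.2 = v p + p.2 + c from by ring]
        ring
      · simp [Set.indicator_of_notMem hp]
    rw [e1] at hineq
    have e3 : ∫ p in A, (loss (v p + p.2 + c) - loss (v p + p.2) - (-μ * h p) * c) ∂(nu ζ)
        = (∫ p in A, (loss (v p + p.2 + c) - loss (v p + p.2)) ∂(nu ζ))
          - ∫ p in A, -μ * h p * c ∂(nu ζ) :=
      integral_sub hb.integrableOn (hg2int.mul_const c).integrableOn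
    rw [e3]
    linarith [hineq, e2]
  have hsubae : ∀ᵐ p ∂(nu ζ), (-μ * h p) ∈ subderiv loss (v p + p.2) := by
    have hall : ∀ᵐ p ∂(nu ζ), ∀ q : ℚ,
        loss (v p + p.2) + (-μ * h p) * q ≤ loss (v p + p.2 + q) :=
      ae_all_iff.mpr fun q => stepc q
    filter_upwards [hall] with p hp
    exact Stmt4Aux.subderiv_of_rat hK.continuous hp
  -- Stage 3 : prox identity
  have hmain : ∀ᵐ p ∂(nu ζ), prox κ loss (α * p.1 + p.2) = v p + p.2 := by
    filter_upwards [hsubae, hae_k] with p hp1 hp2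
    refine Stmt4Aux.prox_eq_of_subderiv hconv hκpos hp1 ?_
    have hkp : h p + c0 * p.1 = r⁻¹ * v p := hp2
    have hhp : h p = r⁻¹ * v p - c0 * p.1 := by linarith
    have hκμ : κ * μ = r := by rw [hκ, div_mul_cancel₀ _ hμne]
    have hrc0 : r * c0 = α := by rw [hα, hc0, div_eq_mul_inv]
    linear_combination h p * hκμ + r * hhp + v p * hrr + (-p.1) * hrc0
  -- Stage 4 : the nonlinear system
  have hXae : ∀ᵐ p ∂(nu ζ),
      (α * p.1 + p.2) - prox κ loss (α * p.1 + p.2) = α * p.1 - v p := by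
    filter_upwards [hmain] with p hp
    rw [hp]; ring
  have hIvG : ∫ p, v p * p.1 ∂(nu ζ) = r * Real.sqrt (1 - δ⁻¹) := by
    have hGv : Gcal ζ δ v = hnorm ζ v - (∫ p, v p * p.1 ∂(nu ζ)) / Real.sqrt (1 - δ⁻¹) := rfl
    rw [hGv, ← hr] at hGcal0
    have h' : (∫ p, v p * p.1 ∂(nu ζ)) / Real.sqrt (1 - δ⁻¹) = r := by linarith
    rw [div_eq_iff hs.ne'] at h'
    linarith [h']
  have hIvG' : ∫ p, v p * p.1 ∂(nu ζ) = α * (1 - δ⁻¹) := by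
    rw [hIvG, hrα, mul_assoc, Real.mul_self_sqrt h01.le]
  have hIv2' : ∫ p, (v p) ^ 2 ∂(nu ζ) = α ^ 2 * (1 - δ⁻¹) := by
    rw [hIv2, hrα, mul_pow, Real.sq_sqrt h01.le]
  have hint_vG : Integrable (fun p : ℝ × ℝ => v p * p.1) (nu ζ) := Stmt4Aux.int_mul hv2 hG2
  have hintG2 : Integrable (fun p : ℝ × ℝ => p.1 ^ 2) (nu ζ) := hG2.integrable_sq
  have heq2int : ∫ p : ℝ × ℝ, ((α * p.1 + p.2) - prox κ loss (α * p.1 + p.2)) * p.1 ∂(nu ζ)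
      = α * 1 - α * (1 - δ⁻¹) := by
    have step1 : ∫ p : ℝ × ℝ, ((α * p.1 + p.2) - prox κ loss (α * p.1 + p.2)) * p.1 ∂(nu ζ)
        = ∫ p : ℝ × ℝ, (α * p.1 ^ 2 - v p * p.1) ∂(nu ζ) := by
      refine integral_congr_ae ?_
      filter_upwards [hXae] with p hp
      rw [hp]; ring
    rw [step1, integral_sub (hintG2.const_mul α) hint_vG, integral_const_mul, hIG2, hIvG']
  have heq1int : ∫ p : ℝ × ℝ, ((α * p.1 + p.2) - prox κ loss (α * p.1 + p.2)) ^ 2 ∂(nu ζ)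
      = (α ^ 2 * 1 - 2 * α * (α * (1 - δ⁻¹))) + α ^ 2 * (1 - δ⁻¹) := by
    have step1 : ∫ p : ℝ × ℝ, ((α * p.1 + p.2) - prox κ loss (α * p.1 + p.2)) ^ 2 ∂(nu ζ)
        = ∫ p : ℝ × ℝ, ((α ^ 2 * p.1 ^ 2 - (2 * α) * (v p * p.1)) + (v p) ^ 2) ∂(nu ζ) := by
      refine integral_congr_ae ?_
      filter_upwards [hXae] with p hp
      rw [hp]; ring
    have ia : Integrable (fun p : ℝ × ℝ => α ^ 2 * p.1 ^ 2 - (2 * α) * (v p * p.1)) (nu ζ) :=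
      (hintG2.const_mul _).sub (hint_vG.const_mul _)
    rw [step1, integral_add ia hv2.integrable_sq,
      integral_sub (hintG2.const_mul _) (hint_vG.const_mul _),
      integral_const_mul, integral_const_mul, hIG2, hIvG', hIv2']
  have hδinv : δ * δ⁻¹ = 1 := mul_inv_cancel₀ hδ0.ne'
  have heq1 : α ^ 2 = δ * ∫ p : ℝ × ℝ,
      ((α * p.1 + p.2) - prox κ loss (α * p.1 + p.2)) ^ 2 ∂(nu ζ) := by
    rw [heq1int]
    linear_combination (-(α ^ 2)) * hδinv
  have heq2 : α = δ * ∫ p : ℝ × ℝ,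
      ((α * p.1 + p.2) - prox κ loss (α * p.1 + p.2)) * p.1 ∂(nu ζ) := by
    rw [heq2int]
    linear_combination (-α) * hδinv
  refine ⟨hαpos, hκpos, ⟨heq1, heq2⟩, ?_⟩
  filter_upwards [hmain] with p hp
  rw [hp]
  ring


end
end

section
/- Suppose loss : ℝ → ℝ is convex and Lipschitz with argmin loss = {0}, δ > 1, and P(Z ≠ 0) > 0. If (α_*, κ_*) ∈ (0,∞)² is a solution to the nonlinear system, then v_* := prox[κ_*·loss](α_* G + Z) − Z belongs to H, satisfies ‖v_*‖ = α_*·√(1−δ⁻¹) > 0, solves the constrained problem min_{v∈H : Gcal(v) ≤ 0} Lcal(v), and the KKT condition holds at v_* with Lagrange multiplier μ_* = α_*·√(1−δ⁻¹)/κ_* > 0. -/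
open MeasureTheory ProbabilityTheory Real Set Filter

noncomputable section

lemma prox_isMin {loss : ℝ → ℝ} (hcont : Continuous loss)
    (hmin0 : ∀ y, loss 0 ≤ loss y) {κ : ℝ} (hκ : 0 < κ) (x : ℝ) :
    ∀ y : ℝ, κ * loss (prox κ loss x) + (x - prox κ loss x) ^ 2 / 2
      ≤ κ * loss y + (x - y) ^ 2 / 2 := by
  have hex : ∃ u : ℝ, ∀ y : ℝ, κ * loss u + (x - u) ^ 2 / 2 ≤ κ * loss y + (x - y) ^ 2 / 2 := by
    set φ : ℝ → ℝ := fun u => κ * loss u + (x - u) ^ 2 / 2 with hφ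
    have hφc : Continuous φ := ((continuous_const.mul hcont).add
      (((continuous_const.sub continuous_id).pow 2).div_const 2))
    set R : ℝ := 1 + Real.sqrt (2 * κ * (loss x - loss 0)) with hR
    have hRpos : 0 < R := by positivity
    have hxmem : x ∈ Icc (x - R) (x + R) := by
      constructor <;> nlinarith
    obtain ⟨u0, hu0S, hu0min⟩ := isCompact_Icc.exists_isMinOn ⟨x, hxmem⟩ hφc.continuousOn
    refine ⟨u0, fun y => ?_⟩
    by_cases hy : y ∈ Icc (x - R) (x + R)
    · exact hu0min hy
    · have h1 : κ * loss u0 + (x - u0) ^ 2 / 2 ≤ κ * loss x + (x - x) ^ 2 / 2 := hu0min hxmem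
      have h2 : R < |x - y| := by
        rcases not_and_or.mp hy with h | h
        · push_neg at h
          rw [abs_of_pos (by linarith)]; linarith
        · push_neg at h
          rw [abs_of_neg (by linarith)]; linarith
      have hRsq : 2 * κ * (loss x - loss 0) ≤ R ^ 2 := by
        have h0 : (0:ℝ) ≤ Real.sqrt (2 * κ * (loss x - loss 0)) := Real.sqrt_nonneg _
        have := Real.sq_sqrt (by nlinarith [hmin0 x] : (0:ℝ) ≤ 2 * κ * (loss x - loss 0))
        nlinarith
      have hy2 : R ^ 2 < (x - y) ^ 2 := by
        have := sq_abs (x - y); nlinarith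
      have h4 := hmin0 y
      show κ * loss u0 + (x - u0) ^ 2 / 2 ≤ κ * loss y + (x - y) ^ 2 / 2
      nlinarith
  exact Classical.epsilon_spec hex

lemma subderiv_of_prox {loss : ℝ → ℝ} (hconv : ConvexOn ℝ Set.univ loss)
    (hcont : Continuous loss) (hmin0 : ∀ y, loss 0 ≤ loss y) {κ : ℝ} (hκ : 0 < κ) (x : ℝ) :
    (x - prox κ loss x) / κ ∈ subderiv loss (prox κ loss x) := by
  intro y
  set p := prox κ loss x with hp
  rcases eq_or_ne y p with rfl | hyp
  · simp
  have hd : 0 < (y - p) ^ 2 := by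
    have h := abs_pos.mpr (sub_ne_zero.mpr hyp)
    nlinarith [sq_abs (y - p)]
  refine le_of_forall_pos_le_add fun ε hε => ?_
  set t : ℝ := min 1 (2 * κ * ε / (y - p) ^ 2) with ht
  have ht0 : 0 < t := lt_min one_pos (by positivity)
  have ht1 : t ≤ 1 := min_le_left _ _
  have hkey := prox_isMin hcont hmin0 hκ x (p + t * (y - p))
  have hcvx : loss (p + t * (y - p)) ≤ (1 - t) * loss p + t * loss y := by
    have := hconv.2 (Set.mem_univ p) (Set.mem_univ y) (by linarith : (0:ℝ) ≤ 1 - t)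
      (le_of_lt ht0) (by ring)
    simpa [smul_eq_mul, show (1 - t) * p + t * y = p + t * (y - p) by ring] using this
  have h2 : κ * loss p + (x - p) ^ 2 / 2
      ≤ κ * ((1 - t) * loss p + t * loss y) + (x - p - t * (y - p)) ^ 2 / 2 := by
    calc κ * loss p + (x - p) ^ 2 / 2
        ≤ κ * loss (p + t * (y - p)) + (x - (p + t * (y - p))) ^ 2 / 2 := hkey
      _ ≤ κ * ((1 - t) * loss p + t * loss y) + (x - p - t * (y - p)) ^ 2 / 2 := by
          have h : (x - (p + t * (y - p))) = (x - p - t * (y - p)) := by ring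
          rw [h]
          nlinarith
  have h3 : κ * loss p + (x - p) * (y - p) ≤ κ * loss y + t * (y - p) ^ 2 / 2 := by
    have hexp : (x - p - t * (y - p)) ^ 2 / 2
        = (x - p) ^ 2 / 2 - t * ((x - p) * (y - p)) + t ^ 2 * (y - p) ^ 2 / 2 := by ring
    rw [hexp] at h2
    have h4 : t * (κ * loss p + (x - p) * (y - p)) ≤ t * (κ * loss y + t * (y - p) ^ 2 / 2) := by
      nlinarith
    exact le_of_mul_le_mul_left h4 ht0
  have h5 : t * (y - p) ^ 2 / 2 ≤ κ * ε := by
    have hle : t ≤ 2 * κ * ε / (y - p) ^ 2 := min_le_right _ _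
    have := (le_div_iff₀ hd).mp hle
    linarith
  have h6 : κ * loss p + (x - p) * (y - p) ≤ κ * loss y + κ * ε := by linarith
  show loss p + (x - p) / κ * (y - p) ≤ loss y + ε
  have heq : (x - p) / κ * (y - p) = ((x - p) * (y - p)) / κ := by ring
  rw [heq]
  have h7 : ((x - p) * (y - p)) / κ ≤ loss y + ε - loss p := by
    rw [div_le_iff₀ hκ]; nlinarith
  linarith

lemma abs_subderiv_le {loss : ℝ → ℝ} {K : NNReal} (hlip : LipschitzWith K loss)
    {g z : ℝ} (hg : g ∈ subderiv loss z) : |g| ≤ K := by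
  have lb : ∀ a b : ℝ, loss a - loss b ≤ K * |a - b| := by
    intro a b
    have h := hlip.dist_le_mul a b
    rw [Real.dist_eq, Real.dist_eq] at h
    exact le_trans (le_abs_self _) h
  have h1 := hg (z + 1)
  have h2 := hg (z - 1)
  have l1 := lb (z + 1) z
  have l2 := lb (z - 1) z
  simp only [add_sub_cancel_left, abs_one, mul_one] at l1
  have e2 : |z - 1 - z| = 1 := by
    rw [show z - 1 - z = -1 by ring, abs_neg, abs_one]
  rw [e2] at l2
  rw [abs_le]
  constructor <;> nlinarith [h1, h2, l1, l2]

lemma prox_lipschitz {loss : ℝ → ℝ} (hconv : ConvexOn ℝ Set.univ loss)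
    (hcont : Continuous loss) (hmin0 : ∀ y, loss 0 ≤ loss y) {κ : ℝ} (hκ : 0 < κ) :
    LipschitzWith 1 (prox κ loss) := by
  refine LipschitzWith.of_dist_le_mul fun x y => ?_
  rw [Real.dist_eq, Real.dist_eq, NNReal.coe_one, one_mul]
  set px := prox κ loss x
  set py := prox κ loss y
  have hx := subderiv_of_prox hconv hcont hmin0 hκ x py
  have hy := subderiv_of_prox hconv hcont hmin0 hκ y px
  -- hx : loss px + (x - px)/κ * (py - px) ≤ loss py
  -- hy : loss py + (y - py)/κ * (px - py) ≤ loss px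
  have hmono : ((x - px) - (y - py)) * (py - px) ≤ 0 := by
    have hsum : (x - px) / κ * (py - px) + (y - py) / κ * (px - py) ≤ 0 := by linarith
    have h9 : (((x - px) - (y - py)) * (py - px)) / κ ≤ 0 := by
      have heq : (((x - px) - (y - py)) * (py - px)) / κ
          = (x - px) / κ * (py - px) + (y - py) / κ * (px - py) := by ring
      rw [heq]; exact hsum
    have h10 := mul_le_mul_of_nonneg_right h9 hκ.le
    rw [div_mul_cancel₀ _ (ne_of_gt hκ), zero_mul] at h10
    exact h10
  have hsq : (px - py) ^ 2 ≤ (x - y) * (px - py) := by nlinarith [hmono]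
  have habs : |px - py| ^ 2 ≤ |x - y| * |px - py| := by
    calc |px - py| ^ 2 = (px - py) ^ 2 := sq_abs _
      _ ≤ (x - y) * (px - py) := hsq
      _ ≤ |(x - y) * (px - py)| := le_abs_self _
      _ = |x - y| * |px - py| := abs_mul _ _
  rcases eq_or_lt_of_le (abs_nonneg (px - py)) with h0 | h0
  · rw [← h0]; exact abs_nonneg _
  · nlinarith [habs]

lemma memL2_integrable_mul {X : Type*} [MeasurableSpace X] {μ : Measure X}
    {f g : X → ℝ} (hf : MemLp f 2 μ) (hg : MemLp g 2 μ) :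
    Integrable (fun x => f x * g x) μ := by
  refine Integrable.mono' (((hf.integrable_sq.add hg.integrable_sq)).div_const 2)
    (hf.1.mul hg.1) (Eventually.of_forall fun x => ?_)
  rw [Real.norm_eq_abs, abs_mul]
  show |f x| * |g x| ≤ (f x ^ 2 + g x ^ 2) / 2
  have := sq_nonneg (|f x| - |g x|)
  have h1 : |f x| ^ 2 = f x ^ 2 := sq_abs _
  have h2 : |g x| ^ 2 = g x ^ 2 := sq_abs _
  nlinarith [abs_nonneg (f x), abs_nonneg (g x)]

lemma integral_mul_le_sqrt {X : Type*} [MeasurableSpace X] {μ : Measure X}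
    {f g : X → ℝ} (hf : MemLp f 2 μ) (hg : MemLp g 2 μ) :
    ∫ x, f x * g x ∂μ ≤ Real.sqrt (∫ x, f x ^ 2 ∂μ) * Real.sqrt (∫ x, g x ^ 2 ∂μ) := by
  set A := ∫ x, f x ^ 2 ∂μ with hA
  set B := ∫ x, g x ^ 2 ∂μ with hB
  set C := ∫ x, f x * g x ∂μ with hC
  have hA0 : 0 ≤ A := integral_nonneg fun x => sq_nonneg _
  have hB0 : 0 ≤ B := integral_nonneg fun x => sq_nonneg _
  have key : ∀ t : ℝ, 0 ≤ t ^ 2 * A - 2 * t * C + B := by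
    intro t
    have h1 : 0 ≤ ∫ x, (t * f x - g x) ^ 2 ∂μ := integral_nonneg fun x => sq_nonneg _
    have h2 : ∫ x, (t * f x - g x) ^ 2 ∂μ = t ^ 2 * A - 2 * t * C + B := by
      have hint1 : Integrable (fun x => t ^ 2 * f x ^ 2 - 2 * t * (f x * g x)) μ :=
        (hf.integrable_sq.const_mul _).sub ((memL2_integrable_mul hf hg).const_mul _)
      have heq : (fun x => (t * f x - g x) ^ 2)
          = fun x => (t ^ 2 * f x ^ 2 - 2 * t * (f x * g x)) + g x ^ 2 := by
        funext x; ring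
      rw [heq, integral_add hint1 hg.integrable_sq,
        integral_sub (hf.integrable_sq.const_mul _) ((memL2_integrable_mul hf hg).const_mul _),
        integral_const_mul, integral_const_mul]
    linarith [h2 ▸ h1]
  have hCle : C ≤ Real.sqrt A * Real.sqrt B := by
    rcases eq_or_lt_of_le hA0 with hA1 | hA1
    · -- A = 0 : show C ≤ 0 ≤ RHS would need C ≤ RHS; show C ≤ 0
      by_cases hCpos : 0 < C
      · exfalso
        have := key ((B + 1) / (2 * C))
        rw [← hA1] at this
        have h2C : (0:ℝ) < 2 * C := by linarith
        have : 2 * ((B + 1) / (2 * C)) * C = B + 1 := by field_simp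
        nlinarith [key ((B + 1) / (2 * C)), this]
      · push_neg at hCpos
        exact le_trans hCpos (by positivity)
    · have h := key (C / A)
      have hC2 : C ^ 2 ≤ A * B := by
        have : (C / A) ^ 2 * A - 2 * (C / A) * C + B = B - C ^ 2 / A := by
          field_simp; ring
        rw [this] at h
        have := (div_le_iff₀ hA1).mp (by linarith : C ^ 2 / A ≤ B)
        linarith [this]
      calc C ≤ |C| := le_abs_self _
        _ = Real.sqrt (C ^ 2) := (Real.sqrt_sq_eq_abs C).symm
        _ ≤ Real.sqrt (A * B) := Real.sqrt_le_sqrt hC2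
        _ = Real.sqrt A * Real.sqrt B := Real.sqrt_mul hA0 B
  exact hCle

lemma rpow_two_eq (x : ℝ) : x ^ (2:ℝ) = x ^ 2 := by
  rw [show (2:ℝ) = ((2:ℕ):ℝ) by norm_num, Real.rpow_natCast]

lemma integrable_sq_mul_gauss :
    Integrable (fun x : ℝ => x ^ 2 * Real.exp (-(1/2) * x ^ 2)) volume := by
  have h := integrable_rpow_mul_exp_neg_mul_sq (b := 1/2) (by norm_num) (s := 2) (by norm_num)
  simpa [rpow_two_eq] using h

lemma integral_sq_mul_gauss_Ioi :
    ∫ x in Ioi (0:ℝ), x ^ 2 * Real.exp (-(1/2) * x ^ 2) = Real.sqrt (2 * π) / 2 := by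
  have h := integral_rpow_mul_exp_neg_mul_rpow (p := 2) (q := 2) (b := 1/2)
    (by norm_num) (by norm_num) (by norm_num)
  have heq : ∫ x in Ioi (0:ℝ), x ^ (2:ℝ) * Real.exp (-(1/2) * x ^ (2:ℝ))
      = ∫ x in Ioi (0:ℝ), x ^ 2 * Real.exp (-(1/2) * x ^ 2) := by
    simp_rw [rpow_two_eq]
  rw [heq] at h
  rw [h]
  have hG : Real.Gamma ((2 + 1) / 2) = Real.sqrt π / 2 := by
    rw [show ((2:ℝ) + 1) / 2 = 1/2 + 1 by norm_num, Real.Gamma_add_one (by norm_num),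
      Real.Gamma_one_half_eq]
    ring
  rw [hG]
  have hb : ((1:ℝ)/2) ^ (-((2:ℝ) + 1) / 2) = 2 * Real.sqrt 2 := by
    rw [show ((1:ℝ)/2) = 2⁻¹ by norm_num, ← Real.rpow_neg_one (2:ℝ),
      ← Real.rpow_mul (by norm_num)]
    rw [show (-1 * (-((2:ℝ) + 1) / 2) : ℝ) = 1 + 1/2 by norm_num,
      Real.rpow_add (by norm_num), Real.rpow_one, ← Real.sqrt_eq_rpow]
  rw [hb]
  rw [show Real.sqrt (2 * π) = Real.sqrt 2 * Real.sqrt π from Real.sqrt_mul (by norm_num) _]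
  ring

lemma integral_sq_mul_gauss :
    ∫ x : ℝ, x ^ 2 * Real.exp (-(1/2) * x ^ 2) = Real.sqrt (2 * π) := by
  set f : ℝ → ℝ := fun x => x ^ 2 * Real.exp (-(1/2) * x ^ 2) with hf
  have hsplit : ∫ x : ℝ, f x = (∫ x in Iic (0:ℝ), f x) + ∫ x in Ioi (0:ℝ), f x := by
    rw [← intervalIntegral.integral_Iic_add_Ioi integrable_sq_mul_gauss.integrableOn
      integrable_sq_mul_gauss.integrableOn]
  have heven : (∫ x in Iic (0:ℝ), f x) = ∫ x in Ioi (0:ℝ), f x := by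
    have h1 : (∫ x in Iic (0:ℝ), f (-x)) = ∫ x in Ioi (-(0:ℝ)), f x :=
      integral_comp_neg_Iic 0 f
    have h2 : ∀ x : ℝ, f (-x) = f x := by intro x; simp [hf]
    simp_rw [h2] at h1
    simpa using h1
  rw [hsplit, heven, integral_sq_mul_gauss_Ioi]
  ring
lemma gaussianPDFReal_zero_one (x : ℝ) :
    gaussianPDFReal 0 1 x = (Real.sqrt (2 * π))⁻¹ * Real.exp (-(1/2) * x ^ 2) := by
  rw [gaussianPDFReal]
  push_cast
  rw [mul_one, sub_zero]
  congr 1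
  ring_nf

lemma integral_sq_gaussianReal : ∫ x : ℝ, x ^ 2 ∂(gaussianReal 0 1) = 1 := by
  rw [gaussianReal_of_var_ne_zero 0 one_ne_zero]
  have hrfl : gaussianPDF 0 1 = fun x => (((gaussianPDFReal 0 1 x).toNNReal : NNReal) : ENNReal) :=
    rfl
  rw [hrfl]
  rw [integral_withDensity_eq_integral_smul ((measurable_gaussianPDFReal 0 1).real_toNNReal)]
  have heq : (fun x : ℝ => Real.toNNReal (gaussianPDFReal 0 1 x) • x ^ 2)
      = fun x : ℝ => (Real.sqrt (2 * π))⁻¹ * (x ^ 2 * Real.exp (-(1/2) * x ^ 2)) := by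
    funext x
    rw [NNReal.smul_def, Real.coe_toNNReal _ (gaussianPDFReal_nonneg 0 1 x),
      gaussianPDFReal_zero_one, smul_eq_mul]
    ring
  rw [heq, integral_const_mul, integral_sq_mul_gauss]
  have : Real.sqrt (2 * π) ≠ 0 := by
    positivity
  field_simp

lemma integrable_sq_gaussianReal : Integrable (fun x : ℝ => x ^ 2) (gaussianReal 0 1) := by
  rw [gaussianReal_of_var_ne_zero 0 one_ne_zero]
  rw [integrable_withDensity_iff (measurable_gaussianPDF 0 1)
    (ae_of_all _ fun x => ENNReal.ofReal_lt_top)]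
  have heq : (fun x : ℝ => x ^ 2 * (gaussianPDF 0 1 x).toReal)
      = fun x : ℝ => (Real.sqrt (2 * π))⁻¹ * (x ^ 2 * Real.exp (-(1/2) * x ^ 2)) := by
    funext x
    rw [gaussianPDF, ENNReal.toReal_ofReal (gaussianPDFReal_nonneg 0 1 x),
      gaussianPDFReal_zero_one]
    ring
  rw [heq]
  exact integrable_sq_mul_gauss.const_mul _

lemma memL2_id_gauss : MemLp (fun x : ℝ => x) 2 (gaussianReal 0 1) :=
  (memLp_two_iff_integrable_sq measurable_id.aestronglyMeasurable).mpr integrable_sq_gaussianReal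


/-- from a positive solution `(α_*, κ_*)` of the nonlinear system,
`v_* = prox[κ_* loss](α_* G + Z) − Z` solves the constrained problem, has norm
`α_*·√(1−δ⁻¹) > 0`, and the KKT condition holds with `μ_* = α_*·√(1−δ⁻¹)/κ_* > 0`. -/
theorem stmt5 (ζ : Measure ℝ) [IsProbabilityMeasure ζ] (loss : ℝ → ℝ) (δ : ℝ)
    (hconv : ConvexOn ℝ Set.univ loss) (hlip : LipschitzFun loss)
    (hmin : argminIsZero loss) (hδ : 1 < δ) (hZ : 0 < ζ {x : ℝ | x ≠ 0})
    (α κ : ℝ) (hα : 0 < α) (hκ : 0 < κ) (hsys : solvesSystem ζ loss δ α κ) :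
    inH ζ (fun p => prox κ loss (α * p.1 + p.2) - p.2) ∧
    hnorm ζ (fun p => prox κ loss (α * p.1 + p.2) - p.2) = α * Real.sqrt (1 - δ⁻¹) ∧
    0 < α * Real.sqrt (1 - δ⁻¹) ∧
    SolvesConstrained ζ loss δ (fun p => prox κ loss (α * p.1 + p.2) - p.2) ∧
    0 < α * Real.sqrt (1 - δ⁻¹) / κ ∧
    KKT ζ loss δ (α * Real.sqrt (1 - δ⁻¹) / κ)
      (fun p => prox κ loss (α * p.1 + p.2) - p.2) := by
  obtain ⟨K, hK⟩ := hlip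
  have hcont : Continuous loss := hK.continuous
  have hmin0 : ∀ y, loss 0 ≤ loss y := by
    intro y
    have h0 : (0:ℝ) ∈ {x : ℝ | ∀ y, loss x ≤ loss y} := by rw [hmin]; exact rfl
    exact h0 y
  haveI hPprob : IsProbabilityMeasure (nu ζ) := by
    rw [nu]; infer_instance
  have hδ0 : (0:ℝ) < δ := lt_trans one_pos hδ
  have hδne : δ ≠ 0 := ne_of_gt hδ0
  have h1δ : 0 < 1 - δ⁻¹ := by
    have : δ⁻¹ < 1 := by
      rw [inv_lt_one_iff₀]; right; exact hδ
    linarith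
  set s : ℝ := Real.sqrt (1 - δ⁻¹) with hs
  have hs0 : 0 < s := Real.sqrt_pos.mpr h1δ
  have hs2 : s ^ 2 = 1 - δ⁻¹ := Real.sq_sqrt h1δ.le
  set v : ℝ × ℝ → ℝ := fun p => prox κ loss (α * p.1 + p.2) - p.2 with hv
  set e : ℝ × ℝ → ℝ := fun p => (α * p.1 + p.2) - prox κ loss (α * p.1 + p.2) with he
  have hve : ∀ p, v p = α * p.1 - e p := by
    intro p; simp only [hv, he]; ring
  -- measurability
  have hlin : Measurable fun p : ℝ × ℝ => α * p.1 + p.2 :=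
    (measurable_fst.const_mul α).add measurable_snd
  have hproxm : Measurable (prox κ loss) :=
    (prox_lipschitz hconv hcont hmin0 hκ).continuous.measurable
  have hem : Measurable e := hlin.sub (hproxm.comp hlin)
  have hvm : Measurable v := (hproxm.comp hlin).sub measurable_snd
  -- bound on e
  have hebd : ∀ p, |e p| ≤ κ * K := by
    intro p
    have h := abs_subderiv_le hK (subderiv_of_prox hconv hcont hmin0 hκ (α * p.1 + p.2))
    rw [abs_div, abs_of_pos hκ, div_le_iff₀ hκ] at h
    calc |e p| ≤ (K : ℝ) * κ := h
      _ = κ * K := mul_comm _ _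
  -- L2 membership
  have hbddL2 : ∀ (w : ℝ × ℝ → ℝ) (C : ℝ), Measurable w → (∀ p, |w p| ≤ C) →
      MemLp w 2 (nu ζ) := by
    intro w C hwm hwb
    exact (memLp_top_of_bound hwm.aestronglyMeasurable C
      (ae_of_all _ fun p => by simpa using hwb p)).mono_exponent le_top
  have heL2 : MemLp e 2 (nu ζ) := hbddL2 e (κ * K) hem hebd
  have hmapfst : (nu ζ).map Prod.fst = gaussianReal 0 1 := by
    rw [nu, Measure.map_fst_prod]
    simp
  have hGL2 : MemLp (fun p : ℝ × ℝ => p.1) 2 (nu ζ) := by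
    have h := memL2_id_gauss
    rw [← hmapfst] at h
    exact (memLp_map_measure_iff measurable_id.aestronglyMeasurable
      measurable_fst.aemeasurable).mp h
  have hGsq : ∫ p : ℝ × ℝ, p.1 ^ 2 ∂(nu ζ) = 1 := by
    have h : ∫ x : ℝ, x ^ 2 ∂((nu ζ).map Prod.fst) = 1 := by
      rw [hmapfst]; exact integral_sq_gaussianReal
    rwa [integral_map measurable_fst.aemeasurable (by fun_prop)] at h
  have hvL2 : MemLp v 2 (nu ζ) := by
    have hveq : v = fun p => α * p.1 - e p := funext hve
    rw [hveq]
    exact (hGL2.const_mul α).sub heL2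
  -- integrabilities
  have iG2 : Integrable (fun p : ℝ × ℝ => p.1 ^ 2) (nu ζ) := hGL2.integrable_sq
  have ie2 : Integrable (fun p : ℝ × ℝ => e p ^ 2) (nu ζ) := heL2.integrable_sq
  have ieG : Integrable (fun p : ℝ × ℝ => e p * p.1) (nu ζ) := memL2_integrable_mul heL2 hGL2
  -- system integrals
  have hsys1 : α ^ 2 = δ * ∫ p : ℝ × ℝ, e p ^ 2 ∂(nu ζ) := hsys.1
  have hsys2 : α = δ * ∫ p : ℝ × ℝ, e p * p.1 ∂(nu ζ) := hsys.2
  have hIe2 : ∫ p : ℝ × ℝ, e p ^ 2 ∂(nu ζ) = α ^ 2 / δ := by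
    rw [eq_div_iff hδne]; linarith
  have hIeG : ∫ p : ℝ × ℝ, e p * p.1 ∂(nu ζ) = α / δ := by
    rw [eq_div_iff hδne]; linarith
  -- main integrals
  have hIv2 : ∫ p : ℝ × ℝ, v p ^ 2 ∂(nu ζ) = (α * s) ^ 2 := by
    have hexp : (fun p : ℝ × ℝ => v p ^ 2)
        = fun p => (α ^ 2 * p.1 ^ 2 - (2 * α) * (e p * p.1)) + e p ^ 2 := by
      funext p; rw [hve p]; ring
    have hf2 : Integrable (fun p : ℝ × ℝ => α ^ 2 * p.1 ^ 2) (nu ζ) := iG2.const_mul _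
    have hf3 : Integrable (fun p : ℝ × ℝ => 2 * α * (e p * p.1)) (nu ζ) := ieG.const_mul _
    have hf1 : Integrable (fun p : ℝ × ℝ => α ^ 2 * p.1 ^ 2 - 2 * α * (e p * p.1)) (nu ζ) :=
      hf2.sub hf3
    rw [hexp, integral_add hf1 ie2,
      integral_sub hf2 hf3, integral_const_mul, integral_const_mul,
      hGsq, hIeG, hIe2, mul_pow, hs2]
    field_simp
    ring
  have hIvG : ∫ p : ℝ × ℝ, v p * p.1 ∂(nu ζ) = α * s ^ 2 := by
    have hexp : (fun p : ℝ × ℝ => v p * p.1)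
        = fun p => α * p.1 ^ 2 - e p * p.1 := by
      funext p; rw [hve p]; ring
    have hf2 : Integrable (fun p : ℝ × ℝ => α * p.1 ^ 2) (nu ζ) := iG2.const_mul _
    rw [hexp, integral_sub hf2 ieG, integral_const_mul, hGsq, hIeG, hs2]
    field_simp
  have hnv : hnorm ζ v = α * s := by
    show Real.sqrt (∫ p : ℝ × ℝ, v p ^ 2 ∂(nu ζ)) = α * s
    rw [hIv2]
    exact Real.sqrt_sq (by positivity)
  have hGv : Gcal ζ δ v = 0 := by
    show hnorm ζ v - (∫ p : ℝ × ℝ, v p * p.1 ∂(nu ζ)) / s = 0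
    rw [hnv, hIvG, sq]
    field_simp
    ring
  -- the subgradient functions
  set g : ℝ × ℝ → ℝ := fun p => e p / κ with hg
  set h : ℝ × ℝ → ℝ := fun p => -e p / (α * s) with hh
  have hgL2 : MemLp g 2 (nu ζ) := by
    refine hbddL2 g K (hem.div_const κ) fun p => ?_
    show |e p / κ| ≤ (K : ℝ)
    rw [abs_div, abs_of_pos hκ, div_le_iff₀ hκ]
    calc |e p| ≤ κ * K := hebd p
      _ = (K : ℝ) * κ := mul_comm _ _
  have hhL2 : MemLp h 2 (nu ζ) := by
    refine hbddL2 h (κ * K / (α * s)) ((hem.neg.div_const _)) fun p => ?_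
    show |(-e p) / (α * s)| ≤ κ * K / (α * s)
    rw [abs_div, abs_of_pos (by positivity : (0:ℝ) < α * s), abs_neg]
    have hden : (0:ℝ) < α * s := by positivity
    exact (div_le_div_iff_of_pos_right hden).mpr (hebd p)
  -- subdifferential of Gcal at v
  have hsubG : h ∈ subdiffH ζ (Gcal ζ δ) v := by
    refine ⟨hhL2, fun u huH => ?_⟩
    have huH' : MemLp u 2 (nu ζ) := huH
    have ivu : Integrable (fun p : ℝ × ℝ => v p * u p) (nu ζ) := memL2_integrable_mul hvL2 huH'
    have iv2 : Integrable (fun p : ℝ × ℝ => v p ^ 2) (nu ζ) := hvL2.integrable_sq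
    have iuG : Integrable (fun p : ℝ × ℝ => u p * p.1) (nu ζ) := memL2_integrable_mul huH' hGL2
    have ivG : Integrable (fun p : ℝ × ℝ => v p * p.1) (nu ζ) := memL2_integrable_mul hvL2 hGL2
    have hIh : ∫ p : ℝ × ℝ, h p * (u p - v p) ∂(nu ζ)
        = (∫ p : ℝ × ℝ, v p * u p ∂(nu ζ)) / (α * s)
          - (∫ p : ℝ × ℝ, u p * p.1 ∂(nu ζ)) / s := by
      have hpt : (fun p : ℝ × ℝ => h p * (u p - v p))
          = fun p => (v p * u p - v p ^ 2) / (α * s) - (u p * p.1 - v p * p.1) / s := by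
        funext p
        show -e p / (α * s) * (u p - v p)
            = (v p * u p - v p ^ 2) / (α * s) - (u p * p.1 - v p * p.1) / s
        rw [hve p]
        have hαs : α * s ≠ 0 := by positivity
        field_simp
        ring
      have hq1 : Integrable (fun p : ℝ × ℝ => (v p * u p - v p ^ 2) / (α * s)) (nu ζ) :=
        (ivu.sub iv2).div_const _
      have hq2 : Integrable (fun p : ℝ × ℝ => (u p * p.1 - v p * p.1) / s) (nu ζ) :=
        (iuG.sub ivG).div_const _
      rw [hpt, integral_sub hq1 hq2,
        integral_div, integral_div, integral_sub ivu iv2, integral_sub iuG ivG, hIv2, hIvG]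
      have hsne : s ≠ 0 := ne_of_gt hs0
      have hαne : α ≠ 0 := ne_of_gt hα
      field_simp
      ring
    have hGu : Gcal ζ δ u = Real.sqrt (∫ p : ℝ × ℝ, u p ^ 2 ∂(nu ζ))
        - (∫ p : ℝ × ℝ, u p * p.1 ∂(nu ζ)) / s := rfl
    have hCS : ∫ p : ℝ × ℝ, v p * u p ∂(nu ζ)
        ≤ (α * s) * Real.sqrt (∫ p : ℝ × ℝ, u p ^ 2 ∂(nu ζ)) := by
      have hcs := integral_mul_le_sqrt hvL2 huH'
      rwa [hIv2, Real.sqrt_sq (by positivity : (0:ℝ) ≤ α * s)] at hcs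
    have hD : (∫ p : ℝ × ℝ, v p * u p ∂(nu ζ)) / (α * s)
        ≤ Real.sqrt (∫ p : ℝ × ℝ, u p ^ 2 ∂(nu ζ)) := by
      rw [div_le_iff₀ (by positivity : (0:ℝ) < α * s)]
      linarith
    rw [hGv, hIh, hGu]
    linarith
  -- subdifferential inequality for Lcal
  have hLsub : ∀ u : ℝ × ℝ → ℝ, MemLp u 2 (nu ζ) →
      Lcal ζ loss v + ∫ p : ℝ × ℝ, g p * (u p - v p) ∂(nu ζ) ≤ Lcal ζ loss u := by
    intro u huH
    have hlossbd : ∀ a b : ℝ, loss a - loss b ≤ (K:ℝ) * |a - b| := by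
      intro a b
      have hd := hK.dist_le_mul a b
      rw [Real.dist_eq, Real.dist_eq] at hd
      exact le_trans (le_abs_self _) hd
    have hintloss : ∀ w : ℝ × ℝ → ℝ, MemLp w 2 (nu ζ) →
        Integrable (fun p : ℝ × ℝ => loss (w p + p.2) - loss p.2) (nu ζ) := by
      intro w hwH
      have hwL1 : Integrable w (nu ζ) :=
        memLp_one_iff_integrable.mp (hwH.mono_exponent (by norm_num))
      refine Integrable.mono' (hwL1.abs.const_mul (K:ℝ))
        ((hcont.comp_aestronglyMeasurable (hwH.1.add measurable_snd.aestronglyMeasurable)).sub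
          (hcont.comp_aestronglyMeasurable measurable_snd.aestronglyMeasurable))
        (ae_of_all _ fun p => ?_)
      rw [Real.norm_eq_abs, abs_le]
      constructor
      · have := hlossbd (p.2) (w p + p.2)
        rw [show p.2 - (w p + p.2) = -(w p) by ring, abs_neg] at this
        linarith
      · have := hlossbd (w p + p.2) (p.2)
        rw [show w p + p.2 - p.2 = w p by ring] at this
        linarith
    have hintv := hintloss v hvL2
    have hintu := hintloss u huH
    have hintg : Integrable (fun p : ℝ × ℝ => g p * (u p - v p)) (nu ζ) :=
      memL2_integrable_mul hgL2 (huH.sub hvL2)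
    have hptw : ∀ p : ℝ × ℝ, (loss (v p + p.2) - loss p.2) + g p * (u p - v p)
        ≤ loss (u p + p.2) - loss p.2 := by
      intro p
      have hsg := subderiv_of_prox hconv hcont hmin0 hκ (α * p.1 + p.2) (u p + p.2)
      have hep : (α * p.1 + p.2 - prox κ loss (α * p.1 + p.2)) / κ = g p := rfl
      have hvp : prox κ loss (α * p.1 + p.2) = v p + p.2 := by
        simp only [hv]; ring
      rw [hep, hvp] at hsg
      linarith
    calc Lcal ζ loss v + ∫ p : ℝ × ℝ, g p * (u p - v p) ∂(nu ζ)
        = ∫ p : ℝ × ℝ, ((loss (v p + p.2) - loss p.2) + g p * (u p - v p)) ∂(nu ζ) :=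
          (integral_add hintv hintg).symm
      _ ≤ ∫ p : ℝ × ℝ, (loss (u p + p.2) - loss p.2) ∂(nu ζ) :=
          integral_mono (hintv.add hintg) hintu hptw
      _ = Lcal ζ loss u := rfl
  have hsubL : g ∈ subdiffH ζ (Lcal ζ loss) v := ⟨hgL2, fun u huH => hLsub u huH⟩
  -- multiplier
  have hμpos : 0 < α * s / κ := by positivity
  -- relation g = -μ h
  have hgh : (fun p : ℝ × ℝ => -(α * s / κ) * h p) = g := by
    funext p
    show -(α * s / κ) * (-e p / (α * s)) = e p / κ
    have hαs : α * s ≠ 0 := by positivity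
    field_simp
  -- assemble
  refine ⟨hvL2, hnv, by positivity, ⟨hvL2, le_of_eq hGv, fun u huH hGcu => ?_⟩, hμpos,
    ⟨⟨h, hsubG, by rw [hgh]; exact hsubL⟩, by rw [hGv]; ring, le_of_eq hGv⟩⟩
  -- constrained optimality
  have huH' : MemLp u 2 (nu ζ) := huH
  have hGle := hsubG.2 u huH
  rw [hGv, zero_add] at hGle
  have hIneg : ∫ p : ℝ × ℝ, h p * (u p - v p) ∂(nu ζ) ≤ 0 := le_trans hGle hGcu
  have hIg : ∫ p : ℝ × ℝ, g p * (u p - v p) ∂(nu ζ)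
      = (α * s / κ) * (- ∫ p : ℝ × ℝ, h p * (u p - v p) ∂(nu ζ)) := by
    rw [← integral_neg, ← integral_const_mul]
    congr 1
    funext p
    rw [← hgh]
    ring
  have hpos : 0 ≤ ∫ p : ℝ × ℝ, g p * (u p - v p) ∂(nu ζ) := by
    rw [hIg]
    exact mul_nonneg hμpos.le (by linarith)
  have := hLsub u huH'
  linarith

end
end

section
/- Let loss : ℝ → ℝ be convex with argmin loss = {0}. If loss is not Lipschitz, then there exists a probability distribution for the noise variable Z such that, for every δ > 0, the nonlinear system admits no solution (α,κ) ∈ (0,∞)²: any solution would force α to be infinite. -/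
open MeasureTheory ProbabilityTheory Real Set Filter
open scoped ENNReal NNReal

noncomputable section

section auxlemmas

lemma unit_slope_mono {f : ℝ → ℝ} (hf : ConvexOn ℝ Set.univ f) {a b : ℝ} (hab : a ≤ b) :
    f (a+1) - f a ≤ f (b+1) - f b := by
  rcases eq_or_lt_of_le hab with rfl | h
  · exact le_refl _
  · have h1 := hf.secant_mono (mem_univ a) (mem_univ (a+1)) (mem_univ (b+1))
      (by intro hc; linarith [hc ▸ (by linarith : a < a+1)]) (by intro hc; nlinarith [hc]) (by linarith)
    have h2 := hf.secant_mono (mem_univ (b+1)) (mem_univ a) (mem_univ b)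
      (by intro hc; nlinarith) (by intro hc; nlinarith) (by linarith)
    have e1 : (f (a+1) - f a) / (a + 1 - a) = f (a+1) - f a := by
      rw [show a + 1 - a = 1 by ring, div_one]
    have e2 : (f a - f (b+1)) / (a - (b+1)) = (f (b+1) - f a) / (b + 1 - a) := by
      rw [← neg_div_neg_eq]; congr 1 <;> ring
    have e3 : (f b - f (b+1)) / (b - (b+1)) = f (b+1) - f b := by
      rw [show b - (b+1) = -1 by ring, div_neg, div_one]; ring
    rw [e1] at h1
    rw [e2, e3] at h2
    exact le_trans h1 h2

lemma slope_le_unit {f : ℝ → ℝ} (hf : ConvexOn ℝ Set.univ f) {x y : ℝ} (hxy : x < y) :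
    (f y - f x) / (y - x) ≤ f (y+1) - f y := by
  have h := hf.secant_mono (mem_univ y) (mem_univ x) (mem_univ (y+1))
    (by intro hc; linarith) (by intro hc; linarith) (by linarith)
  have e1 : (f x - f y) / (x - y) = (f y - f x)/(y - x) := by
    rw [← neg_div_neg_eq]; congr 1 <;> ring
  have e2 : (f (y+1) - f y) / (y + 1 - y) = f (y+1) - f y := by
    rw [show y + 1 - y = 1 by ring, div_one]
  rw [e1, e2] at h
  exact h

lemma unit_le_slope {f : ℝ → ℝ} (hf : ConvexOn ℝ Set.univ f) {x y : ℝ} (hxy : x < y) :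
    f x - f (x-1) ≤ (f y - f x) / (y - x) := by
  have h := hf.secant_mono (mem_univ x) (mem_univ (x-1)) (mem_univ y)
    (by intro hc; linarith) (by intro hc; linarith) (by linarith)
  have e1 : (f (x-1) - f x) / (x - 1 - x) = f x - f (x-1) := by
    rw [show x - 1 - x = -1 by ring, div_neg, div_one]; ring
  rw [e1] at h
  exact h

lemma lip_of_unit_bounded {f : ℝ → ℝ} (hf : ConvexOn ℝ Set.univ f) {M : ℝ} (hM0 : 0 ≤ M)
    (hR : ∀ t : ℝ, 0 ≤ t → f (t+1) - f t ≤ M)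
    (hL : ∀ t : ℝ, 0 ≤ t → f (-(t+1)) - f (-t) ≤ M) :
    LipschitzFun f := by
  have key : ∀ x y : ℝ, x < y → |f y - f x| ≤ M * (y - x) := by
    intro x y hxy
    have hub : f (y+1) - f y ≤ M := by
      rcases le_or_gt 0 y with hy | hy
      · exact hR y hy
      · exact le_trans (unit_slope_mono hf hy.le) (by simpa using hR 0 le_rfl)
    have hlb : -M ≤ f x - f (x-1) := by
      rcases le_or_gt x 0 with hx | hx
      · have := hL (-x) (by linarith)
        have e : -(-x+1) = x - 1 := by ring
        rw [e] at this
        have e2 : -(-x) = x := by ring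
        rw [e2] at this
        linarith
      · have h1 : f 0 - f (-1) ≤ f x - f (x-1) := by
          have := unit_slope_mono hf (a := -1) (b := x - 1) (by linarith)
          have e : (-1:ℝ)+1 = 0 := by ring
          rw [e] at this
          have e2 : x - 1 + 1 = x := by ring
          rw [e2] at this
          linarith
        have h2 := hL 0 le_rfl
        norm_num at h2 h1 ⊢
        linarith
    have h1 := slope_le_unit hf hxy
    have h2 := unit_le_slope hf hxy
    have hd : (0:ℝ) < y - x := by linarith
    rw [div_le_iff₀ hd] at h1
    rw [le_div_iff₀ hd] at h2
    rw [abs_le]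
    constructor <;> nlinarith
  refine ⟨Real.toNNReal M, LipschitzWith.of_dist_le_mul fun x y => ?_⟩
  rw [Real.dist_eq, Real.dist_eq, Real.coe_toNNReal M hM0]
  rcases lt_trichotomy x y with h | rfl | h
  · rw [abs_sub_comm, abs_of_nonpos (by linarith : x - y ≤ 0),
      show -(x-y) = y - x by ring]
    exact key x y h
  · simp
  · rw [abs_of_nonneg (by linarith : (0:ℝ) ≤ x - y)]
    exact key y x h

lemma exists_steep {f : ℝ → ℝ} (hf : ConvexOn ℝ Set.univ f) (hnl : ¬ LipschitzFun f) :
    ∃ σ : ℝ, (σ = 1 ∨ σ = -1) ∧ ∀ M : ℝ, ∃ t : ℝ, 0 ≤ t ∧ M < f (σ*(t+1)) - f (σ*t) := by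
  by_contra hc
  push_neg at hc
  obtain ⟨M₁, hM₁⟩ := hc 1 (Or.inl rfl)
  obtain ⟨M₂, hM₂⟩ := hc (-1) (Or.inr rfl)
  apply hnl
  refine lip_of_unit_bounded hf (M := max (max M₁ M₂) 0) (le_max_right _ _) ?_ ?_
  · intro t ht
    have := hM₁ t ht
    simp only [one_mul] at this
    exact le_trans this (le_trans (le_max_left _ _) (le_max_left _ _))
  · intro t ht
    have := hM₂ t ht
    rw [show (-1:ℝ)*(t+1) = -(t+1) by ring, show (-1:ℝ)*t = -t by ring] at this
    exact le_trans this (le_trans (le_max_right _ _) (le_max_left _ _))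

lemma usl_mono {f : ℝ → ℝ} (hf : ConvexOn ℝ Set.univ f) {σ : ℝ} (hσ : σ = 1 ∨ σ = -1)
    {a b : ℝ} (hab : a ≤ b) :
    f (σ*(a+1)) - f (σ*a) ≤ f (σ*(b+1)) - f (σ*b) := by
  rcases hσ with rfl | rfl
  · simpa only [one_mul] using unit_slope_mono hf hab
  · have := unit_slope_mono hf (a := -(b+1)) (b := -(a+1)) (by linarith)
    rw [show -(b+1) + 1 = -b by ring, show -(a+1) + 1 = -a by ring] at this
    rw [show (-1:ℝ)*(a+1) = -(a+1) by ring, show (-1:ℝ)*a = -a by ring,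
      show (-1:ℝ)*(b+1) = -(b+1) by ring, show (-1:ℝ)*b = -b by ring]
    linarith

lemma prox_spec {f : ℝ → ℝ} (hcont : Continuous f) (h0 : ∀ y, f 0 ≤ f y)
    {κ : ℝ} (hκ : 0 ≤ κ) (x : ℝ) :
    ∀ y, κ * f (prox κ f x) + (x - prox κ f x) ^ 2 / 2 ≤ κ * f y + (x - y) ^ 2 / 2 := by
  apply Classical.epsilon_spec
    (p := fun u : ℝ => ∀ y : ℝ, κ * f u + (x - u) ^ 2 / 2 ≤ κ * f y + (x - y) ^ 2 / 2)
  set R : ℝ := Real.sqrt (2*κ*(f x - f 0)) + 1 with hR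
  have hs : 0 ≤ Real.sqrt (2*κ*(f x - f 0)) := Real.sqrt_nonneg _
  have hsq : Real.sqrt (2*κ*(f x - f 0)) ^ 2 = 2*κ*(f x - f 0) := by
    rw [sq, Real.mul_self_sqrt]
    have := h0 x
    nlinarith
  have hRpos : 0 < R := by positivity
  set φ : ℝ → ℝ := fun u => κ * f u + (x - u) ^ 2 / 2 with hφ
  have hφc : Continuous φ := by fun_prop
  obtain ⟨u0, hu0m, hu0⟩ := isCompact_Icc.exists_isMinOn (α := ℝ)
    (s := Icc (x - R) (x + R)) ⟨x, by constructor <;> linarith⟩ hφc.continuousOn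
  refine ⟨u0, fun y => ?_⟩
  rcases le_or_gt (φ y) (φ x) with hy | hy
  · have hyin : y ∈ Icc (x - R) (x + R) := by
      by_contra hyn
      have hfar : R ^ 2 < (x - y) ^ 2 := by
        simp only [mem_Icc, not_and_or, not_le] at hyn
        rcases hyn with h | h <;> nlinarith
      have : φ x < φ y := by
        have hb : κ * f 0 ≤ κ * f y := by
          have := h0 y; nlinarith
        simp only [hφ]
        have hxx : (x - x : ℝ) = 0 := by ring
        nlinarith
      linarith
    exact hu0 hyin
  · exact le_trans (hu0 (⟨by linarith, by linarith⟩ : x ∈ Icc (x-R) (x+R))) hy.le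

lemma residual_lb {f : ℝ → ℝ} (hf : ConvexOn ℝ Set.univ f) (hcont : Continuous f)
    (h0 : ∀ y, f 0 ≤ f y) {σ : ℝ} (hσ : σ = 1 ∨ σ = -1) {κ t x : ℝ}
    (hκ : 0 ≤ κ) (ht : 0 ≤ t) (hx : 2*t + 4 ≤ σ * x) :
    min t (κ * (f (σ*(t+2)) - f (σ*(t+1))) - 1/2) ≤ σ * (x - prox κ f x) := by
  set p := prox κ f x with hp
  have hσ2 : σ * σ = 1 := by rcases hσ with rfl | rfl <;> norm_num
  have hspec := prox_spec hcont h0 hκ x (p - σ)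
  have key : κ * (f p - f (p - σ)) - 1/2 ≤ σ * (x - p) := by
    have expand : (x - (p - σ)) ^ 2 = (x - p) ^ 2 + 2*σ*(x-p) + σ*σ := by ring
    rw [expand] at hspec
    linarith [hσ2, hspec]
  rcases le_or_gt (t + 2) (σ * p) with hcase | hcase
  · have hslope : f (σ*(t+2)) - f (σ*(t+1)) ≤ f p - f (p - σ) := by
      rcases hσ with rfl | rfl
      · have := unit_slope_mono hf (a := t+1) (b := p - 1) (by simpa using by linarith : t + 1 ≤ p - 1)
        rw [show p - 1 + 1 = p by ring] at this
        rw [show (1:ℝ)*(t+2) = (t+1)+1 by ring, show (1:ℝ)*(t+1) = t+1 by ring]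
        linarith
      · have := unit_slope_mono hf (a := p) (b := -(t+2)) (by linarith : p ≤ -(t+2))
        rw [show -(t+2) + 1 = -(t+1) by ring] at this
        rw [show (-1:ℝ)*(t+2) = -(t+2) by ring, show (-1:ℝ)*(t+1) = -(t+1) by ring]
        have hps : p - -1 = p + 1 := by ring
        rw [hps]
        linarith
    calc min t (κ * (f (σ*(t+2)) - f (σ*(t+1))) - 1/2)
        ≤ κ * (f (σ*(t+2)) - f (σ*(t+1))) - 1/2 := min_le_right _ _
      _ ≤ κ * (f p - f (p - σ)) - 1/2 := by nlinarith [hslope, hκ]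
      _ ≤ σ * (x - p) := key
  · have hexp : σ * (x - p) = σ * x - σ * p := by ring
    calc min t (κ * (f (σ*(t+2)) - f (σ*(t+1))) - 1/2) ≤ t := min_le_left _ _
      _ ≤ σ * (x - p) := by rw [hexp]; linarith

def zeta (c : ℕ → ℝ) : Measure ℝ :=
  Measure.sum (fun n => ((2:ℝ≥0∞)⁻¹) ^ (n+1) • Measure.dirac (c n))

lemma zeta_prob (c : ℕ → ℝ) : IsProbabilityMeasure (zeta c) := by
  constructor
  rw [zeta, Measure.sum_apply _ MeasurableSet.univ]
  simp only [Measure.smul_apply, measure_univ, smul_eq_mul, mul_one]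
  rw [show (fun n : ℕ => ((2:ℝ≥0∞)⁻¹)^(n+1)) = fun n : ℕ => (2:ℝ≥0∞)⁻¹ * ((2:ℝ≥0∞)⁻¹)^n from funext fun n => pow_succ' _ _]
  rw [ENNReal.tsum_mul_left, ENNReal.tsum_geometric]
  rw [ENNReal.one_sub_inv_two, inv_inv]
  exact ENNReal.inv_mul_cancel two_ne_zero ENNReal.ofNat_ne_top

lemma zeta_atom (c : ℕ → ℝ) (n : ℕ) : ((2:ℝ≥0∞)⁻¹)^(n+1) ≤ zeta c {c n} := by
  rw [zeta, Measure.sum_apply _ (measurableSet_singleton _)]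
  refine le_trans ?_ (ENNReal.le_tsum n)
  simp [Measure.dirac_apply_of_mem (mem_singleton (c n))]

lemma gauss_pos {A : Set ℝ} (hA : Ici (0:ℝ) ⊆ A ∨ Iic (0:ℝ) ⊆ A) :
    0 < gaussianReal 0 1 A := by
  rcases hA with h | h
  · refine lt_of_lt_of_le ?_ (measure_mono h)
    rw [pos_iff_ne_zero]
    intro hz
    have := gaussianReal_absolutelyContinuous' 0 one_ne_zero hz
    rw [Real.volume_Ici] at this
    exact ENNReal.top_ne_zero this
  · refine lt_of_lt_of_le ?_ (measure_mono h)
    rw [pos_iff_ne_zero]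
    intro hz
    have := gaussianReal_absolutelyContinuous' 0 one_ne_zero hz
    rw [Real.volume_Iic] at this
    exact ENNReal.top_ne_zero this

end auxlemmas

/-- if `loss` is convex with `argmin loss = {0}` but not Lipschitz, there is a
noise distribution for which the nonlinear system has no solution `(α, κ) ∈ (0,∞)²`. -/
theorem stmt11 (loss : ℝ → ℝ) (hconv : ConvexOn ℝ Set.univ loss)
    (hmin : argminIsZero loss) (hnotlip : ¬ LipschitzFun loss) :
    ∃ ζ : Measure ℝ, IsProbabilityMeasure ζ ∧
      ∀ δ : ℝ, 0 < δ →
        ∀ α κ : ℝ, 0 < α → 0 < κ → ¬ solvesSystem ζ loss δ α κ := by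
  have hcont : Continuous loss :=
    continuousOn_univ.mp (ConvexOn.continuousOn isOpen_univ hconv)
  have h0 : ∀ y, loss 0 ≤ loss y := by
    have h00 : (0:ℝ) ∈ {x : ℝ | ∀ y, loss x ≤ loss y} := by
      rw [hmin]; exact mem_singleton _
    exact h00
  obtain ⟨σ, hσ, hsteep⟩ := exists_steep hconv hnotlip
  have hσ2 : σ * σ = 1 := by rcases hσ with rfl | rfl <;> norm_num
  have hchoice : ∀ n : ℕ, ∃ t : ℝ, 0 ≤ t ∧ (4:ℝ)^n ≤ t ∧
      (4:ℝ)^n < loss (σ*(t+1)) - loss (σ*t) := by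
    intro n
    obtain ⟨t', ht'0, ht'⟩ := hsteep ((4:ℝ)^n)
    refine ⟨max t' ((4:ℝ)^n), le_trans ht'0 (le_max_left _ _), le_max_right _ _, ?_⟩
    exact lt_of_lt_of_le ht' (usl_mono hconv hσ (le_max_left _ _))
  choose tn htn0 htn4 htnsteep using hchoice
  set b : ℕ → ℝ := fun n => 2 * tn n + 4 with hb
  set ζ : Measure ℝ := zeta (fun n => σ * b n) with hζ
  haveI hζP : IsProbabilityMeasure ζ := zeta_prob _
  refine ⟨ζ, hζP, ?_⟩
  intro δ hδ α κ hα hκ hsys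
  obtain ⟨h1, -⟩ := hsys
  haveI : IsProbabilityMeasure (nu ζ) := by
    rw [nu]; infer_instance
  set F : ℝ × ℝ → ℝ := fun p => ((α * p.1 + p.2) - prox κ loss (α * p.1 + p.2)) ^ 2 with hF
  by_cases hint : Integrable F (nu ζ)
  · set I : ℝ := ∫ p : ℝ × ℝ, F p ∂(nu ζ) with hIdef
    -- gaussian positive set
    set A : Set ℝ := {g : ℝ | 0 ≤ σ * g} with hA
    have hAm : MeasurableSet A := measurableSet_le measurable_const (measurable_id.const_mul σ)
    have hApos : 0 < gaussianReal 0 1 A := by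
      apply gauss_pos
      rcases hσ with rfl | rfl
      · left; intro g hg; simpa [hA] using hg
      · right; intro g hg
        simp only [hA, mem_setOf_eq]
        simp only [mem_Iic] at hg
        nlinarith
    set γ : ℝ := (gaussianReal 0 1 A).toReal with hγdef
    have hγ : 0 < γ := ENNReal.toReal_pos hApos.ne' (measure_ne_top _ _)
    obtain ⟨n, hn⟩ := pow_unbounded_of_one_lt (max (2/κ) (2*I/γ + 1)) (by norm_num : (1:ℝ) < 2)
    have hn1 : 2/κ < 2^n := lt_of_le_of_lt (le_max_left _ _) hn
    have hn2 : 2*I/γ + 1 < 2^n := lt_of_le_of_lt (le_max_right _ _) hn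
    have hκ2n : 2 < κ * 2^n := by
      rw [div_lt_iff₀ hκ] at hn1; linarith
    have h4n : (4:ℝ)^n = (2:ℝ)^n * (2:ℝ)^n := by
      rw [show (4:ℝ) = 2*2 by norm_num, mul_pow]
    have h2npos : (0:ℝ) < 2^n := by positivity
    set S : Set (ℝ × ℝ) := A ×ˢ ({σ * b n} : Set ℝ) with hS
    have hSm : MeasurableSet S := hAm.prod (measurableSet_singleton _)
    -- lower bound for F on S
    have hFlb : ∀ p ∈ S, (4:ℝ)^n ≤ F p := by
      rintro ⟨g, z⟩ hp
      obtain ⟨hg, hz⟩ := hp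
      simp only [mem_singleton_iff] at hz
      subst hz
      have hg' : 0 ≤ σ * g := hg
      set x : ℝ := α * g + σ * b n with hx
      have hσx : 2 * tn n + 4 ≤ σ * x := by
        have : σ * x = α * (σ * g) + (σ * σ) * b n := by rw [hx]; ring
        rw [this, hσ2, one_mul]
        have : 0 ≤ α * (σ * g) := mul_nonneg hα.le hg'
        simp only [hb]; linarith
      have hres := residual_lb hconv hcont h0 hσ (κ := κ) (t := tn n) (x := x)
        hκ.le (htn0 n) hσx
      have hslope2 : (4:ℝ)^n < loss (σ*(tn n+2)) - loss (σ*(tn n+1)) := by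
        have := usl_mono hconv hσ (a := tn n) (b := tn n + 1) (by linarith)
        have e : tn n + 1 + 1 = tn n + 2 := by ring
        rw [e] at this
        linarith [htnsteep n]
      have hmin2 : (2:ℝ)^n ≤ min (tn n) (κ * (loss (σ*(tn n+2)) - loss (σ*(tn n+1))) - 1/2) := by
        apply le_min
        · calc (2:ℝ)^n ≤ (4:ℝ)^n := pow_le_pow_left₀ (by norm_num) (by norm_num) n
            _ ≤ tn n := htn4 n
        · have h4le : (4:ℝ)^n ≤ loss (σ*(tn n+2)) - loss (σ*(tn n+1)) := hslope2.le
          have : κ * (4:ℝ)^n ≤ κ * (loss (σ*(tn n+2)) - loss (σ*(tn n+1))) :=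
            mul_le_mul_of_nonneg_left h4le hκ.le
          rw [h4n, ← mul_assoc] at this
          have hq : 2*(2:ℝ)^n < κ*2^n*2^n := by nlinarith [hκ2n, h2npos]
          have h2n1 : (1:ℝ) ≤ 2^n := one_le_pow₀ (by norm_num)
          linarith
      have hfinal : (2:ℝ)^n ≤ σ * (x - prox κ loss x) := le_trans hmin2 hres
      have hsq : ((2:ℝ)^n)^2 ≤ (σ * (x - prox κ loss x))^2 :=
        pow_le_pow_left₀ h2npos.le hfinal 2
      have hsig : (σ * (x - prox κ loss x))^2 = (x - prox κ loss x)^2 := by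
        rcases hσ with rfl | rfl <;> ring
      rw [hsig] at hsq
      calc (4:ℝ)^n = ((2:ℝ)^n)^2 := by rw [h4n, sq]
        _ ≤ (x - prox κ loss x)^2 := hsq
        _ = F (g, σ * b n) := by simp only [hF, hx]
    -- measure of S
    have hνS : (nu ζ) S = gaussianReal 0 1 A * ζ {σ * b n} := by
      rw [nu, hS, Measure.prod_prod]
    have hζatom : ((2:ℝ≥0∞)⁻¹)^(n+1) ≤ ζ {σ * b n} := zeta_atom (fun n => σ * b n) n
    have hνStoReal : γ * (2⁻¹:ℝ)^(n+1) ≤ ((nu ζ) S).toReal := by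
      rw [hνS, ENNReal.toReal_mul]
      apply mul_le_mul_of_nonneg_left _ (ENNReal.toReal_nonneg)
      calc (2⁻¹:ℝ)^(n+1) = (((2:ℝ≥0∞)⁻¹)^(n+1)).toReal := by
            simp [ENNReal.toReal_pow, ENNReal.toReal_inv]
        _ ≤ (ζ {σ * b n}).toReal := ENNReal.toReal_mono (measure_ne_top _ _) hζatom
    -- integral bounds
    have hIS : (4:ℝ)^n * ((nu ζ) S).toReal ≤ ∫ p in S, F p ∂(nu ζ) :=
      setIntegral_ge_of_const_le_real hSm (measure_ne_top _ _) hFlb hint.integrableOn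
    have hile : ∫ p in S, F p ∂(nu ζ) ≤ I :=
      setIntegral_le_integral hint (ae_of_all _ fun p => sq_nonneg _)
    have hbig : (4:ℝ)^n * (γ * (2⁻¹:ℝ)^(n+1)) ≤ I := by
      refine le_trans ?_ (le_trans hIS hile)
      apply mul_le_mul_of_nonneg_left hνStoReal (by positivity)
    have hpowinv : (2:ℝ)^n * (2⁻¹:ℝ)^n = 1 := by
      rw [← mul_pow]; norm_num
    have hval : (4:ℝ)^n * (γ * (2⁻¹:ℝ)^(n+1)) = (2:ℝ)^n * γ / 2 := by
      rw [h4n, pow_succ]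
      have he : (2:ℝ)^n*2^n*(γ*(2⁻¹^n*2⁻¹)) = (2^n*2⁻¹^n)*(2^n*γ*2⁻¹) := by ring
      rw [he, hpowinv, one_mul]
      ring
    rw [hval] at hbig
    have hcancel : 2*I/γ*γ = 2*I := div_mul_cancel₀ _ hγ.ne'
    have hc2 : 2*I + γ < 2^n * γ := by
      have h := mul_lt_mul_of_pos_right hn2 hγ
      rw [add_mul, hcancel, one_mul] at h
      exact h
    nlinarith [hbig, hγ, hc2]
  · rw [integral_undef hint] at h1
    nlinarith [h1, sq_nonneg α]

end
end
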